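/- arXiv:2310.11428 — 2 statements merged into one kernel-verified Lean document; each statement's English description precedes it below -/
import Mathlib

section
/- Let θ ∼ N(μ′, Σ) be a Gaussian random vector in ℝ^d, and define ℓ_BC(θ) = ½‖θ − μ‖² and the cliff reward J with parameters C ≫ ε² > 0 and optimum θ* = μ. Then there exists a universal constant c₁ > 0 such that J(θ*) − E[J(θ)] ≥ C/2 whenever E[ℓ_BC(θ)] ≥ c₁·ε² (assuming C is larger than an absolute multiple of ε²). -/
open MeasureTheory ProbabilityTheory

/-- The standard Gaussian measure on `ℝ^d` (i.i.d. `N(0,1)` coordinates). -/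
noncomputable def stdGaussianPi (d : ℕ) : Measure (Fin d → ℝ) :=
  Measure.pi fun _ => gaussianReal 0 1

/-- `ν` is the law of a (possibly degenerate) Gaussian random vector in `ℝ^d` with mean `μ'`:
the pushforward of the standard Gaussian under the affine map `z ↦ μ' + A z` (so the covariance
is `Σ = A Aᵀ`). -/
def IsGaussianLaw {d : ℕ} (ν : Measure (Fin d → ℝ)) (μ' : Fin d → ℝ) : Prop :=
  ∃ A : Matrix (Fin d) (Fin d) ℝ,
    ν = Measure.map (fun z => μ' + A.mulVec z) (stdGaussianPi d)

/-- Squared Euclidean norm on `ℝ^d`. -/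
noncomputable def sqnorm {d : ℕ} (v : Fin d → ℝ) : ℝ := ∑ i, v i ^ 2

/-- The cliff reward on `ℝ^d` with target `μ` and parameters `ε, C`:
`J(θ) = −‖θ−μ‖²` if `‖θ − μ‖ ≤ ε`, and `J(θ) = −C` otherwise; `J(μ) = 0`. -/
noncomputable def cliffJVec {d : ℕ} (μ : Fin d → ℝ) (ε C : ℝ) (θ : Fin d → ℝ) : ℝ :=
  if Real.sqrt (sqnorm (θ - μ)) ≤ ε then -sqnorm (θ - μ) else -C

section CliffAux

open Real Matrix
open scoped ENNReal

namespace CliffAux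

instance stdGaussianPi_prob (d : ℕ) : IsProbabilityMeasure (stdGaussianPi d) := by
  unfold stdGaussianPi
  infer_instance

theorem lintegral_pi_prod {d : ℕ} (μ : Fin d → Measure ℝ) [∀ i, SigmaFinite (μ i)]
    (f : Fin d → ℝ → ℝ≥0∞) (hf : ∀ i, Measurable (f i)) :
    ∫⁻ z, ∏ i, f i (z i) ∂Measure.pi μ = ∏ i, ∫⁻ x, f i x ∂μ i := by
  induction d with
  | zero => simp
  | succ n ih =>
    have mp := (measurePreserving_piFinSuccAbove μ 0).symm
    have hmeas : Measurable fun z : Fin (n+1) → ℝ => ∏ i, f i (z i) :=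
      Finset.measurable_prod _ fun i _ => (hf i).comp (measurable_pi_apply i)
    rw [← mp.lintegral_comp hmeas]
    have key : ∀ p : ℝ × (Fin n → ℝ),
        (∏ i, f i (((MeasurableEquiv.piFinSuccAbove (fun _ : Fin (n+1) => ℝ) 0).symm p) i))
        = f 0 p.1 * ∏ i : Fin n, f i.succ (p.2 i) := by
      intro p
      rw [Fin.prod_univ_succ]
      have h0 : ((MeasurableEquiv.piFinSuccAbove (fun _ : Fin (n+1) => ℝ) 0).symm p) 0 = p.1 := by
        simp [MeasurableEquiv.piFinSuccAbove_symm_apply]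
      have hs : ∀ i : Fin n,
          ((MeasurableEquiv.piFinSuccAbove (fun _ : Fin (n+1) => ℝ) 0).symm p) i.succ = p.2 i := by
        intro i
        simp [MeasurableEquiv.piFinSuccAbove_symm_apply, Fin.zero_succAbove]
      rw [h0]
      try rfl
      try exact congrArg _ (Finset.prod_congr rfl fun i _ => by rw [hs i])
    calc ∫⁻ p, (∏ i, f i (((MeasurableEquiv.piFinSuccAbove (fun _ : Fin (n+1) => ℝ) 0).symm p) i))
          ∂(μ 0).prod (Measure.pi fun j => μ (Fin.succAbove 0 j))
        = ∫⁻ p, f 0 p.1 * ∏ i : Fin n, f i.succ (p.2 i)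
          ∂(μ 0).prod (Measure.pi fun j => μ (Fin.succAbove 0 j)) := by
          exact lintegral_congr fun p => key p
      _ = (∫⁻ x, f 0 x ∂μ 0) * ∫⁻ y, ∏ i : Fin n, f i.succ (y i)
            ∂(Measure.pi fun j : Fin n => μ (Fin.succAbove 0 j)) := by
          exact lintegral_prod_mul (hf 0).aemeasurable
            (Finset.measurable_prod Finset.univ (fun (i : Fin n) _ =>
              (hf i.succ).comp (measurable_pi_apply i))).aemeasurable
      _ = ∏ i, ∫⁻ x, f i x ∂μ i := by
          rw [ih (fun j : Fin n => μ (Fin.succAbove 0 j)) (fun i => f i.succ)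
            (fun i => hf i.succ), Fin.prod_univ_succ]
          try rfl
          try exact congrArg _ (Finset.prod_congr rfl fun i _ => by rw [Fin.zero_succAbove])

theorem stdGaussianPi_eq (d : ℕ) :
    stdGaussianPi d
      = (volume : Measure (Fin d → ℝ)).withDensity (fun z => ∏ i, gaussianPDF 0 1 (z i)) := by
  refine Measure.pi_eq fun s hs => ?_
  rw [withDensity_apply _ (MeasurableSet.univ_pi hs),
    ← lintegral_indicator (MeasurableSet.univ_pi hs)]
  have key : ∀ z : Fin d → ℝ,
      (Set.univ.pi s).indicator (fun z => ∏ i, gaussianPDF 0 1 (z i)) z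
        = ∏ i, ((s i).indicator (gaussianPDF 0 1)) (z i) := by
    intro z
    by_cases hz : z ∈ Set.univ.pi s
    · rw [Set.indicator_of_mem hz]
      exact Finset.prod_congr rfl fun i _ =>
        (Set.indicator_of_mem (hz i (Set.mem_univ i)) _).symm
    · rw [Set.indicator_of_notMem hz]
      rw [Set.mem_univ_pi] at hz
      push_neg at hz
      obtain ⟨i, hi⟩ := hz
      exact (Finset.prod_eq_zero (Finset.mem_univ i)
        (Set.indicator_of_notMem hi _)).symm
  calc ∫⁻ z, (Set.univ.pi s).indicator (fun z => ∏ i, gaussianPDF 0 1 (z i)) z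
      = ∫⁻ z, ∏ i, ((s i).indicator (gaussianPDF 0 1)) (z i) := lintegral_congr key
    _ = ∏ i, ∫⁻ x, ((s i).indicator (gaussianPDF 0 1)) x ∂(volume : Measure ℝ) := by
        rw [MeasureTheory.volume_pi]
        exact lintegral_pi_prod _ _ fun i => (measurable_gaussianPDF 0 1).indicator (hs i)
    _ = ∏ i, gaussianReal 0 1 (s i) := by
        refine Finset.prod_congr rfl fun i _ => ?_
        rw [lintegral_indicator (hs i), ← gaussianReal_apply 0 one_ne_zero (s i)]

theorem map_withDensity {α β : Type*} [MeasurableSpace α] [MeasurableSpace β]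
    (μ : Measure α) {φ : α → β} (hφ : Measurable φ) {g : β → ℝ≥0∞} (hg : Measurable g) :
    (μ.withDensity (g ∘ φ)).map φ = (μ.map φ).withDensity g := by
  ext s hs
  rw [Measure.map_apply hφ hs, withDensity_apply _ (hφ hs), withDensity_apply _ hs,
    ← lintegral_indicator (hφ hs), ← lintegral_indicator hs,
    lintegral_map (hg.indicator hs) hφ]
  refine lintegral_congr fun x => ?_
  exact (Set.indicator_comp_right φ).symm

theorem measurable_mulVec {d : ℕ} (Q : Matrix (Fin d) (Fin d) ℝ) :
    Measurable fun z : Fin d → ℝ => Q.mulVec z := by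
  have : (fun z : Fin d → ℝ => Q.mulVec z) = fun z => Matrix.toLin' Q z := by
    funext z; rw [Matrix.toLin'_apply]
  rw [this]
  exact (LinearMap.continuous_on_pi _).measurable

theorem sumsq_mulVec {d : ℕ} {Q : Matrix (Fin d) (Fin d) ℝ} (hQ : Qᵀ * Q = 1)
    (z : Fin d → ℝ) : ∑ i, (Q.mulVec z i) ^ 2 = ∑ i, z i ^ 2 := by
  have h1 : ∑ i, (Q.mulVec z i) ^ 2 = Q.mulVec z ⬝ᵥ Q.mulVec z := by
    simp [dotProduct, sq]
  have h2 : ∑ i, z i ^ 2 = z ⬝ᵥ z := by simp [dotProduct, sq]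
  rw [h1, h2, Matrix.dotProduct_mulVec, ← Matrix.mulVec_transpose,
    Matrix.mulVec_mulVec, hQ, Matrix.one_mulVec]

theorem prod_gaussianPDF {d : ℕ} (w : Fin d → ℝ) :
    (∏ i, gaussianPDF 0 1 (w i))
      = ENNReal.ofReal ((Real.sqrt (2 * π))⁻¹ ^ d * Real.exp (-(∑ i, (w i) ^ 2) / 2)) := by
  simp only [gaussianPDF]
  rw [← ENNReal.ofReal_prod_of_nonneg (fun i _ => gaussianPDFReal_nonneg 0 1 (w i))]
  congr 1
  simp only [gaussianPDFReal]
  rw [Finset.prod_mul_distrib, Finset.prod_const, ← Real.exp_sum]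
  congr 1
  · norm_num
  · rw [← Finset.sum_div, ← Finset.sum_neg_distrib]
    norm_num

theorem measurable_prodPDF (d : ℕ) :
    Measurable fun z : Fin d → ℝ => ∏ i, gaussianPDF 0 1 (z i) :=
  Finset.measurable_prod _ fun i _ =>
    (measurable_gaussianPDF 0 1).comp (measurable_pi_apply i)

theorem map_orth {d : ℕ} {Q : Matrix (Fin d) (Fin d) ℝ} (hQ : Qᵀ * Q = 1) :
    (stdGaussianPi d).map (fun z => Q.mulVec z) = stdGaussianPi d := by
  have hdet2 : Q.det * Q.det = 1 := by
    have h := congrArg Matrix.det hQ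
    rwa [Matrix.det_mul, Matrix.det_transpose, Matrix.det_one] at h
  have hdet : |Q.det| = 1 := by
    rcases mul_self_eq_one_iff.mp hdet2 with h | h <;> rw [h] <;> norm_num
  have hdet0 : Q.det ≠ 0 := by
    intro h; rw [h] at hdet2; norm_num at hdet2
  set D := fun z : Fin d → ℝ => ∏ i, gaussianPDF 0 1 (z i) with hD
  have hDQ : D ∘ (fun z => Q.mulVec z) = D := by
    funext z
    show D (Q.mulVec z) = D z
    rw [hD]
    simp only
    rw [prod_gaussianPDF, prod_gaussianPDF, sumsq_mulVec hQ]
  have hmapvol : (volume : Measure (Fin d → ℝ)).map (fun z => Q.mulVec z) = volume := by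
    have hfun : (fun z : Fin d → ℝ => Q.mulVec z) = Matrix.toLin' Q := by
      funext z; rw [Matrix.toLin'_apply]
    rw [hfun, Real.map_matrix_volume_pi_eq_smul_volume_pi hdet0, abs_inv, hdet]
    norm_num
  calc (stdGaussianPi d).map (fun z => Q.mulVec z)
      = ((volume : Measure (Fin d → ℝ)).withDensity (D ∘ fun z => Q.mulVec z)).map
          (fun z => Q.mulVec z) := by rw [stdGaussianPi_eq, hDQ]
    _ = ((volume : Measure (Fin d → ℝ)).map (fun z => Q.mulVec z)).withDensity D :=
        map_withDensity _ (measurable_mulVec Q) (measurable_prodPDF d)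
    _ = stdGaussianPi d := by rw [hmapvol, ← stdGaussianPi_eq]

theorem map_neg_std {d : ℕ} :
    (stdGaussianPi d).map (fun z : Fin d → ℝ => -z) = stdGaussianPi d := by
  have h1 : ((-1 : Matrix (Fin d) (Fin d) ℝ))ᵀ * (-1) = 1 := by simp
  have h2 : (fun z : Fin d → ℝ => (-1 : Matrix (Fin d) (Fin d) ℝ).mulVec z)
      = fun z : Fin d → ℝ => -z := by
    funext z; rw [Matrix.neg_mulVec, Matrix.one_mulVec]
  rw [← h2]
  exact map_orth h1

theorem map_eval {d : ℕ} (j : Fin d) :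
    (stdGaussianPi d).map (fun z => z j) = gaussianReal 0 1 := by
  ext s hs
  rw [Measure.map_apply (measurable_pi_apply j) hs]
  classical
  set f : Fin d → ℝ → ℝ≥0∞ := fun i => if i = j then s.indicator 1 else fun _ => 1 with hf
  have hfm : ∀ i, Measurable (f i) := by
    intro i
    by_cases h : i = j
    · simp only [hf, h, eq_self_iff_true, if_true]
      exact measurable_const.indicator hs
    · simpa [hf, h] using measurable_const
  have key : ∀ z : Fin d → ℝ,
      ((fun z : Fin d → ℝ => z j) ⁻¹' s).indicator 1 z = ∏ i, f i (z i) := by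
    intro z
    rw [Finset.prod_eq_single_of_mem j (Finset.mem_univ j)
      (fun i _ hij => by simp [hf, hij])]
    simp [hf, Set.indicator_apply, Set.mem_preimage]
  rw [← lintegral_indicator_one (measurable_pi_apply j hs)]
  calc ∫⁻ z, ((fun z : Fin d → ℝ => z j) ⁻¹' s).indicator 1 z ∂stdGaussianPi d
      = ∫⁻ z, ∏ i, f i (z i) ∂stdGaussianPi d := lintegral_congr key
    _ = ∏ i, ∫⁻ x, f i x ∂gaussianReal 0 1 := lintegral_pi_prod _ f hfm
    _ = gaussianReal 0 1 s := by
        rw [Finset.prod_eq_single_of_mem j (Finset.mem_univ j)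
          (fun i _ hij => by simp [hf, hij])]
        simp [hf, lintegral_indicator hs]

theorem lintegral_gauss1 (f : ℝ → ℝ≥0∞) (hf : Measurable f) :
    ∫⁻ x, f x ∂gaussianReal 0 1 = ∫⁻ x, gaussianPDF 0 1 x * f x ∂(volume : Measure ℝ) := by
  rw [gaussianReal_of_var_ne_zero 0 one_ne_zero,
    lintegral_withDensity_eq_lintegral_mul volume (measurable_gaussianPDF 0 1) hf]
  rfl

theorem pdf1_eq (x : ℝ) :
    gaussianPDFReal 0 1 x = (Real.sqrt (2 * π))⁻¹ * Real.exp (-(x ^ 2) / 2) := by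
  simp [gaussianPDFReal]

theorem lintegral_exp_sq_gauss1 {c : ℝ} (hc : 0 ≤ c) :
    ∫⁻ x, ENNReal.ofReal (Real.exp (-(c * x ^ 2))) ∂gaussianReal 0 1
      = ENNReal.ofReal ((Real.sqrt (1 + 2 * c))⁻¹) := by
  rw [lintegral_gauss1 _ (by
    exact (measurable_exp.comp ((measurable_id.pow_const 2).const_mul c).neg).ennreal_ofReal)]
  have hpt : ∀ x : ℝ, gaussianPDF 0 1 x * ENNReal.ofReal (Real.exp (-(c * x ^ 2)))
      = ENNReal.ofReal ((Real.sqrt (2 * π))⁻¹ * Real.exp (-(c + 1/2) * x ^ 2)) := by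
    intro x
    rw [gaussianPDF, ← ENNReal.ofReal_mul (gaussianPDFReal_nonneg 0 1 x), pdf1_eq]
    congr 1
    rw [mul_assoc, ← Real.exp_add]
    congr 1
    ring
  simp_rw [hpt]
  have hint : Integrable (fun x : ℝ => (Real.sqrt (2 * π))⁻¹ * Real.exp (-(c + 1/2) * x ^ 2)) := by
    exact (integrable_exp_neg_mul_sq (by linarith)).const_mul _
  rw [← ofReal_integral_eq_lintegral_ofReal hint (Filter.Eventually.of_forall fun x => by positivity)]
  congr 1
  rw [integral_const_mul, integral_gaussian]
  have hc2 : (0:ℝ) < c + 1/2 := by linarith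
  have h2 : Real.sqrt (π / (c + 1/2)) = Real.sqrt π / Real.sqrt (c + 1/2) :=
    Real.sqrt_div pi_pos.le _
  have h1 : Real.sqrt (1 + 2 * c) = Real.sqrt 2 * Real.sqrt (c + 1/2) := by
    rw [← Real.sqrt_mul (by norm_num : (0:ℝ) ≤ 2)]
    ring_nf
  have h3 : Real.sqrt (2 * π) = Real.sqrt 2 * Real.sqrt π :=
    Real.sqrt_mul (by norm_num) _
  have hπ : Real.sqrt π ≠ 0 := by positivity
  have h2' : Real.sqrt (c + 1/2) ≠ 0 := by positivity
  rw [h1, h2, h3]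
  field_simp

theorem lintegral_exp_lin_gauss1 (b : ℝ) :
    ∫⁻ x, ENNReal.ofReal (Real.exp (b * x)) ∂gaussianReal 0 1
      = ENNReal.ofReal (Real.exp (b ^ 2 / 2)) := by
  rw [lintegral_gauss1 _ (by
    exact (measurable_exp.comp (measurable_id.const_mul b)).ennreal_ofReal)]
  have hpt : ∀ x : ℝ, gaussianPDF 0 1 x * ENNReal.ofReal (Real.exp (b * x))
      = ENNReal.ofReal ((Real.sqrt (2 * π))⁻¹ * (Real.exp (b^2/2) *
          Real.exp (-(1/2) * (x - b) ^ 2))) := by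
    intro x
    rw [gaussianPDF, ← ENNReal.ofReal_mul (gaussianPDFReal_nonneg 0 1 x), pdf1_eq]
    congr 1
    rw [mul_assoc, ← Real.exp_add, ← Real.exp_add]
    congr 1
    ring
  simp_rw [hpt]
  have hshift : Integrable (fun x : ℝ => Real.exp (-(1/2) * (x - b) ^ 2)) := by
    exact (integrable_exp_neg_mul_sq (by norm_num : (0:ℝ) < 1/2)).comp_sub_right b
  have hint : Integrable (fun x : ℝ => (Real.sqrt (2 * π))⁻¹ * (Real.exp (b^2/2) *
      Real.exp (-(1/2) * (x - b) ^ 2))) := (hshift.const_mul _).const_mul _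
  rw [← ofReal_integral_eq_lintegral_ofReal hint (Filter.Eventually.of_forall fun x => by positivity)]
  congr 1
  rw [integral_const_mul, integral_const_mul]
  have : ∫ x : ℝ, Real.exp (-(1/2) * (x - b) ^ 2) = Real.sqrt (π / (1/2)) := by
    rw [show (fun x : ℝ => Real.exp (-(1/2) * (x - b) ^ 2))
        = fun x : ℝ => (fun y : ℝ => Real.exp (-(1/2) * y ^ 2)) (x + (-b)) by
      funext x; simp [sub_eq_add_neg]]
    rw [integral_add_right_eq_self (fun y : ℝ => Real.exp (-(1/2) * y ^ 2)) (-b)]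
    exact integral_gaussian (1/2)
  rw [this]
  have : Real.sqrt (π / (1/2)) = Real.sqrt (2 * π) := by norm_num [mul_comm]
  rw [this]
  have hπ : Real.sqrt (2*π) ≠ 0 := by positivity
  field_simp

theorem sq_le_exps (x : ℝ) : x ^ 2 ≤ 4 * (Real.exp x + Real.exp (-x)) := by
  have h1 : 1 + |x| / 2 ≤ Real.exp (|x| / 2) := by
    have := Real.add_one_le_exp (|x| / 2); linarith
  have h2 : (1 + |x| / 2) ^ 2 ≤ Real.exp (|x| / 2) ^ 2 := by
    have h0 : (0:ℝ) ≤ 1 + |x| / 2 := by positivity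
    exact pow_le_pow_left₀ h0 h1 2
  have h3 : Real.exp (|x| / 2) ^ 2 = Real.exp |x| := by
    rw [sq, ← Real.exp_add]; congr 1; ring
  have h4 : Real.exp |x| ≤ Real.exp x + Real.exp (-x) := by
    rcases abs_cases x with ⟨h, _⟩ | ⟨h, _⟩
    · rw [h]; have := (Real.exp_pos (-x)).le; linarith
    · rw [h]; have := (Real.exp_pos x).le; linarith
  have h5 : x ^ 2 = |x| ^ 2 := (sq_abs x).symm
  nlinarith [abs_nonneg x]

theorem lintegral_sq_gauss1_le :
    ∫⁻ x, ENNReal.ofReal (x ^ 2) ∂gaussianReal 0 1 ≤ ENNReal.ofReal 16 := by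
  have hmono : ∀ x : ℝ, ENNReal.ofReal (x ^ 2)
      ≤ ENNReal.ofReal 4 * (ENNReal.ofReal (Real.exp x) + ENNReal.ofReal (Real.exp (-x))) := by
    intro x
    rw [← ENNReal.ofReal_add (Real.exp_pos x).le (Real.exp_pos (-x)).le,
      ← ENNReal.ofReal_mul (by norm_num)]
    exact ENNReal.ofReal_le_ofReal (sq_le_exps x)
  calc ∫⁻ x, ENNReal.ofReal (x ^ 2) ∂gaussianReal 0 1
      ≤ ∫⁻ x, ENNReal.ofReal 4 * (ENNReal.ofReal (Real.exp x) + ENNReal.ofReal (Real.exp (-x)))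
          ∂gaussianReal 0 1 := lintegral_mono hmono
    _ = ENNReal.ofReal 4 * ((∫⁻ x, ENNReal.ofReal (Real.exp x) ∂gaussianReal 0 1)
          + ∫⁻ x, ENNReal.ofReal (Real.exp (-x)) ∂gaussianReal 0 1) := by
        rw [lintegral_const_mul _ (by
          exact ((measurable_exp.comp measurable_id).ennreal_ofReal.add
            (measurable_exp.comp measurable_id.neg).ennreal_ofReal)),
          lintegral_add_left (by exact (measurable_exp.comp measurable_id).ennreal_ofReal)]
    _ ≤ ENNReal.ofReal 16 := by
        have e1 : ∫⁻ x, ENNReal.ofReal (Real.exp x) ∂gaussianReal 0 1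
            = ENNReal.ofReal (Real.exp (1/2)) := by
          have := lintegral_exp_lin_gauss1 1
          simpa using this
        have e2 : ∫⁻ x, ENNReal.ofReal (Real.exp (-x)) ∂gaussianReal 0 1
            = ENNReal.ofReal (Real.exp (1/2)) := by
          have := lintegral_exp_lin_gauss1 (-1)
          simp only [neg_one_mul] at this
          simpa using this
        rw [e1, e2]
        have hexp : Real.exp (1/2) ≤ 2 := by
          have h4 : Real.exp 1 ≤ 4 := by
            have := Real.exp_one_lt_d9
            linarith
          nlinarith [Real.exp_pos (1/2:ℝ), Real.exp_add (1/2:ℝ) (1/2:ℝ),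
            (Real.exp_pos (1:ℝ)).le]
        calc ENNReal.ofReal 4 * (ENNReal.ofReal (Real.exp (1/2)) + ENNReal.ofReal (Real.exp (1/2)))
            ≤ ENNReal.ofReal 4 * (ENNReal.ofReal 2 + ENNReal.ofReal 2) := by
              gcongr <;> exact ENNReal.ofReal_le_ofReal hexp
          _ = ENNReal.ofReal 16 := by
              rw [← ENNReal.ofReal_add (by norm_num) (by norm_num),
                ← ENNReal.ofReal_mul (by norm_num)]
              norm_num

theorem gauss1_Icc_le {a : ℝ} (ha : 0 ≤ a) :
    gaussianReal 0 1 (Set.Icc (-a) a) ≤ ENNReal.ofReal (2 * a * (Real.sqrt (2 * π))⁻¹) := by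
  rw [gaussianReal_apply 0 one_ne_zero]
  have hb : ∀ x : ℝ, gaussianPDF 0 1 x ≤ ENNReal.ofReal ((Real.sqrt (2 * π))⁻¹) := by
    intro x
    rw [gaussianPDF, pdf1_eq]
    refine ENNReal.ofReal_le_ofReal ?_
    have h1 : Real.exp (-(x ^ 2) / 2) ≤ 1 :=
      Real.exp_le_one_iff.mpr (by nlinarith [sq_nonneg x])
    have h2 : (0:ℝ) ≤ (Real.sqrt (2 * π))⁻¹ := by positivity
    calc (Real.sqrt (2 * π))⁻¹ * Real.exp (-(x ^ 2) / 2)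
        ≤ (Real.sqrt (2 * π))⁻¹ * 1 := by
          exact mul_le_mul_of_nonneg_left h1 h2
      _ = (Real.sqrt (2 * π))⁻¹ := mul_one _
  calc ∫⁻ x in Set.Icc (-a) a, gaussianPDF 0 1 x
      ≤ ∫⁻ _ in Set.Icc (-a) a, ENNReal.ofReal ((Real.sqrt (2 * π))⁻¹) :=
        setLIntegral_mono measurable_const fun x _ => hb x
    _ = ENNReal.ofReal ((Real.sqrt (2 * π))⁻¹) * volume (Set.Icc (-a) a) :=
        setLIntegral_const _ _
    _ = ENNReal.ofReal (2 * a * (Real.sqrt (2 * π))⁻¹) := by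
        rw [Real.volume_Icc, ← ENNReal.ofReal_mul (by positivity)]
        congr 1
        ring

theorem half_le_log_one_add {x : ℝ} (h0 : 0 ≤ x) (h1 : x ≤ 1) :
    x / 2 ≤ Real.log (1 + x) := by
  have h1x : (0:ℝ) < 1 + x := by linarith
  have hlog := Real.log_le_sub_one_of_pos (inv_pos.mpr h1x)
  rw [Real.log_inv] at hlog
  have hinv : (1 + x) * (1 + x)⁻¹ = 1 := mul_inv_cancel₀ (ne_of_gt h1x)
  have hbound : x / 2 ≤ 1 - (1 + x)⁻¹ := by nlinarith [inv_pos.mpr h1x]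
  linarith

theorem sqrt_prod {d : ℕ} {f : Fin d → ℝ} (hf : ∀ j, 0 ≤ f j) :
    Real.sqrt (∏ j, f j) = ∏ j, Real.sqrt (f j) := by
  classical
  induction (Finset.univ : Finset (Fin d)) using Finset.induction_on with
  | empty => simp
  | insert a s hnot ih =>
    rw [Finset.prod_insert hnot, Finset.prod_insert hnot, Real.sqrt_mul (hf _), ih]

theorem ennreal_half_lt {c : ℝ} (h : (1/2 : ℝ≥0∞) < ENNReal.ofReal c) : 1/2 < c := by
  have hc : 0 ≤ c := by
    by_contra hc
    push_neg at hc
    rw [ENNReal.ofReal_eq_zero.mpr hc.le] at h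
    simp at h
  have := ENNReal.toReal_lt_toReal (by norm_num) ENNReal.ofReal_ne_top |>.mpr h
  rwa [ENNReal.toReal_ofReal hc, ENNReal.toReal_div, ENNReal.toReal_one,
    ENNReal.toReal_ofNat] at this

theorem trace_bound {d : ℕ} {Λ : Fin d → ℝ} (hΛ0 : ∀ j, 0 ≤ Λ j) {ε : ℝ} (hε : 0 < ε)
    (h : (1/2 : ℝ≥0∞) < (stdGaussianPi d) {z | (∑ j, Λ j * z j ^ 2) ≤ 4 * ε ^ 2}) :
    ∑ j, Λ j ≤ 39 * ε ^ 2 := by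
  have hε2 : (0:ℝ) < ε ^ 2 := by positivity
  have hSmeas : Measurable fun z : Fin d → ℝ => ∑ j, Λ j * z j ^ 2 :=
    Finset.measurable_sum _ fun j _ =>
      (by fun_prop)
  have hsetmeas : MeasurableSet {z : Fin d → ℝ | (∑ j, Λ j * z j ^ 2) ≤ 4 * ε ^ 2} :=
    measurableSet_le hSmeas measurable_const
  -- Step (i): each eigenvalue is at most 11 ε²
  have hΛ11 : ∀ j, Λ j ≤ 11 * ε ^ 2 := by
    intro j
    by_contra hj
    push_neg at hj
    have hΛpos : 0 < Λ j := lt_of_le_of_lt (by positivity) hj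
    have hsΛ : 0 < Real.sqrt (Λ j) := Real.sqrt_pos.mpr hΛpos
    set a : ℝ := 2 * ε / Real.sqrt (Λ j) with ha
    have hapos : 0 < a := by positivity
    have hsub : {z : Fin d → ℝ | (∑ j, Λ j * z j ^ 2) ≤ 4 * ε ^ 2}
        ⊆ (fun z : Fin d → ℝ => z j) ⁻¹' (Set.Icc (-a) a) := by
      intro z hz
      simp only [Set.mem_setOf_eq] at hz
      have hterm : Λ j * z j ^ 2 ≤ ∑ i, Λ i * z i ^ 2 :=
        Finset.single_le_sum (fun i _ => mul_nonneg (hΛ0 i) (sq_nonneg _)) (Finset.mem_univ j)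
      have hzj2 : z j ^ 2 ≤ a ^ 2 := by
        have ha2 : a ^ 2 = 4 * ε ^ 2 / Λ j := by
          rw [ha, div_pow, Real.sq_sqrt hΛpos.le]
          ring
        rw [ha2, le_div_iff₀ hΛpos]
        nlinarith
      have habs := abs_le_of_sq_le_sq hzj2 hapos.le
      exact Set.mem_preimage.mpr (Set.mem_Icc.mpr (abs_le.mp habs))
    have hlt : (1/2 : ℝ≥0∞) < gaussianReal 0 1 (Set.Icc (-a) a) := by
      refine lt_of_lt_of_le h ?_
      calc stdGaussianPi d {z : Fin d → ℝ | (∑ j, Λ j * z j ^ 2) ≤ 4 * ε ^ 2}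
          ≤ stdGaussianPi d ((fun z : Fin d → ℝ => z j) ⁻¹' (Set.Icc (-a) a)) :=
            measure_mono hsub
        _ = gaussianReal 0 1 (Set.Icc (-a) a) := by
            rw [← map_eval j, Measure.map_apply (measurable_pi_apply j) measurableSet_Icc]
    have hreal : (1/2:ℝ) < 2 * a * (Real.sqrt (2*π))⁻¹ :=
      ennreal_half_lt (lt_of_lt_of_le hlt (gauss1_Icc_le hapos.le))
    have h2π : 0 < Real.sqrt (2*π) := Real.sqrt_pos.mpr (by positivity)
    have hrew : 2 * a * (Real.sqrt (2*π))⁻¹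
        = 4 * ε / (Real.sqrt (Λ j) * Real.sqrt (2*π)) := by
      rw [ha]
      field_simp
      ring
    rw [hrew] at hreal
    have hkey : Real.sqrt (Λ j) * Real.sqrt (2*π) < 8 * ε := by
      rw [lt_div_iff₀ (by positivity)] at hreal
      linarith
    have hsq : Λ j * (2*π) < 64 * ε ^ 2 := by
      have hmm := mul_self_lt_mul_self (by positivity) hkey
      have e1 : Real.sqrt (Λ j) * Real.sqrt (2*π) * (Real.sqrt (Λ j) * Real.sqrt (2*π))
          = Λ j * (2*π) := by
        rw [show Real.sqrt (Λ j) * Real.sqrt (2*π) * (Real.sqrt (Λ j) * Real.sqrt (2*π))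
            = (Real.sqrt (Λ j) * Real.sqrt (Λ j)) * (Real.sqrt (2*π) * Real.sqrt (2*π)) by ring,
          Real.mul_self_sqrt hΛpos.le, Real.mul_self_sqrt (by positivity)]
      nlinarith [hmm, e1]
    nlinarith [Real.pi_gt_three, hj, hε2]
  -- Step (ii): Chernoff bound
  set t : ℝ := (22 * ε ^ 2)⁻¹ with htdef
  have ht : 0 < t := by positivity
  have h22 : (22 * ε ^ 2) * t = 1 := mul_inv_cancel₀ (by positivity)
  have hfj : ∀ j : Fin d, Measurable fun x : ℝ => ENNReal.ofReal (Real.exp (-(t * Λ j * x ^ 2))) :=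
    fun j => (measurable_exp.comp
      (((measurable_id.pow_const 2).const_mul (t * Λ j)).neg)).ennreal_ofReal
  have hprodmeas : Measurable fun z : Fin d → ℝ =>
      ∏ j, ENNReal.ofReal (Real.exp (-(t * Λ j * z j ^ 2))) :=
    Finset.measurable_prod _ fun j _ => (hfj j).comp (measurable_pi_apply j)
  have hmark : stdGaussianPi d {z : Fin d → ℝ | (∑ j, Λ j * z j ^ 2) ≤ 4 * ε ^ 2}
      ≤ ENNReal.ofReal (Real.exp (2/11))
        * ∏ j, ∫⁻ x, ENNReal.ofReal (Real.exp (-(t * Λ j * x ^ 2))) ∂gaussianReal 0 1 := by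
    calc stdGaussianPi d {z : Fin d → ℝ | (∑ j, Λ j * z j ^ 2) ≤ 4 * ε ^ 2}
        = ∫⁻ z, ({z : Fin d → ℝ | (∑ j, Λ j * z j ^ 2) ≤ 4 * ε ^ 2}).indicator 1 z
            ∂stdGaussianPi d := (lintegral_indicator_one hsetmeas).symm
      _ ≤ ∫⁻ z, ENNReal.ofReal (Real.exp (2/11))
            * ∏ j, ENNReal.ofReal (Real.exp (-(t * Λ j * z j ^ 2))) ∂stdGaussianPi d := by
          refine lintegral_mono fun z => ?_
          by_cases hz : z ∈ {z : Fin d → ℝ | (∑ j, Λ j * z j ^ 2) ≤ 4 * ε ^ 2}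
          · rw [Set.indicator_of_mem hz]
            rw [← ENNReal.ofReal_prod_of_nonneg (fun j _ => (Real.exp_pos _).le),
              ← ENNReal.ofReal_mul (Real.exp_pos _).le]
            have hzS : (∑ j, Λ j * z j ^ 2) ≤ 4 * ε ^ 2 := hz
            have hexp : (1:ℝ) ≤ Real.exp (2/11)
                * ∏ j, Real.exp (-(t * Λ j * z j ^ 2)) := by
              rw [← Real.exp_sum, ← Real.exp_add, ← Real.exp_zero]
              apply Real.exp_le_exp.mpr
              have hsum : ∑ j, -(t * Λ j * z j ^ 2) = -(t * ∑ j, Λ j * z j ^ 2) := by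
                rw [Finset.mul_sum, ← Finset.sum_neg_distrib]
                exact Finset.sum_congr rfl fun j _ => by ring
              rw [hsum]
              have hts : t * (∑ j, Λ j * z j ^ 2) ≤ 2/11 := by
                have hmul := mul_le_mul_of_nonneg_left hzS ht.le
                nlinarith [h22]
              linarith
            exact ENNReal.one_le_ofReal.mpr hexp
          · rw [Set.indicator_of_notMem hz]
            exact zero_le
      _ = ENNReal.ofReal (Real.exp (2/11))
            * ∫⁻ z, ∏ j, ENNReal.ofReal (Real.exp (-(t * Λ j * z j ^ 2)))
              ∂stdGaussianPi d := lintegral_const_mul _ hprodmeas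
      _ = ENNReal.ofReal (Real.exp (2/11))
            * ∏ j, ∫⁻ x, ENNReal.ofReal (Real.exp (-(t * Λ j * x ^ 2)))
              ∂gaussianReal 0 1 := by
          rw [show stdGaussianPi d = Measure.pi fun _ => gaussianReal 0 1 from rfl,
            lintegral_pi_prod _ _ hfj]
  have hmgf : ∀ j : Fin d, ∫⁻ x, ENNReal.ofReal (Real.exp (-(t * Λ j * x ^ 2)))
      ∂gaussianReal 0 1 = ENNReal.ofReal ((Real.sqrt (1 + 2 * (t * Λ j)))⁻¹) := by
    intro j
    exact lintegral_exp_sq_gauss1 (mul_nonneg ht.le (hΛ0 j))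
  have hub : stdGaussianPi d {z : Fin d → ℝ | (∑ j, Λ j * z j ^ 2) ≤ 4 * ε ^ 2}
      ≤ ENNReal.ofReal (Real.exp (2/11) * ∏ j, (Real.sqrt (1 + 2 * (t * Λ j)))⁻¹) := by
    refine le_trans hmark ?_
    simp_rw [hmgf]
    rw [← ENNReal.ofReal_prod_of_nonneg (fun j _ => by positivity),
      ← ENNReal.ofReal_mul (Real.exp_pos _).le]
  have hR : (1/2:ℝ) < Real.exp (2/11) * ∏ j, (Real.sqrt (1 + 2 * (t * Λ j)))⁻¹ :=
    ennreal_half_lt (lt_of_lt_of_le h hub)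
  set P : ℝ := ∏ j, (1 + 2 * (t * Λ j)) with hP
  have hfac1 : ∀ j : Fin d, (1:ℝ) ≤ 1 + 2 * (t * Λ j) := fun j => by
    nlinarith [mul_nonneg ht.le (hΛ0 j)]
  have hP1 : (1:ℝ) ≤ P := by
    rw [hP]
    calc (1:ℝ) = ∏ _j : Fin d, (1:ℝ) := by simp
      _ ≤ ∏ j, (1 + 2 * (t * Λ j)) :=
        Finset.prod_le_prod (fun j _ => zero_le_one) (fun j _ => hfac1 j)
  have hPpos : (0:ℝ) < P := lt_of_lt_of_le one_pos hP1
  have hsprod : (∏ j, (Real.sqrt (1 + 2 * (t * Λ j)))⁻¹) = (Real.sqrt P)⁻¹ := by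
    rw [hP, sqrt_prod (fun j => by nlinarith [hfac1 j]), ← Finset.prod_inv_distrib]
  rw [hsprod] at hR
  have hsP : 0 < Real.sqrt P := Real.sqrt_pos.mpr hPpos
  have hsqlt : Real.sqrt P < 2 * Real.exp (2/11) := by
    have hmul := mul_lt_mul_of_pos_right hR hsP
    rw [mul_assoc, inv_mul_cancel₀ (ne_of_gt hsP), mul_one] at hmul
    nlinarith
  have hPlt : P < 4 * Real.exp (4/11) := by
    have hmm := mul_self_lt_mul_self (Real.sqrt_nonneg P) hsqlt
    rw [Real.mul_self_sqrt hPpos.le] at hmm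
    have e2 : 2 * Real.exp (2/11) * (2 * Real.exp (2/11)) = 4 * Real.exp (4/11) := by
      rw [show 2 * Real.exp (2/11) * (2 * Real.exp (2/11))
          = 4 * (Real.exp (2/11) * Real.exp (2/11)) by ring, ← Real.exp_add]
      norm_num
    linarith [hmm, e2.symm.le]
  have hlogP : Real.log P < Real.log 4 + 4/11 := by
    calc Real.log P < Real.log (4 * Real.exp (4/11)) := Real.log_lt_log hPpos hPlt
      _ = Real.log 4 + 4/11 := by
        rw [Real.log_mul (by norm_num) (ne_of_gt (Real.exp_pos _)), Real.log_exp]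
  have hlogsum : Real.log P = ∑ j, Real.log (1 + 2 * (t * Λ j)) :=
    Real.log_prod fun j _ => by nlinarith [hfac1 j]
  have hterm : ∀ j : Fin d, t * Λ j ≤ Real.log (1 + 2 * (t * Λ j)) := by
    intro j
    have hx0 : 0 ≤ 2 * (t * Λ j) := by nlinarith [mul_nonneg ht.le (hΛ0 j)]
    have hx1 : 2 * (t * Λ j) ≤ 1 := by
      have : 2 * (t * Λ j) ≤ 2 * (t * (11 * ε ^ 2)) := by
        have := mul_le_mul_of_nonneg_left (hΛ11 j) ht.le
        linarith
      have heq : 2 * (t * (11 * ε ^ 2)) = (22 * ε ^ 2) * t := by ring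
      linarith [h22, heq.le]
    have := half_le_log_one_add hx0 hx1
    linarith
  have hsumle : t * (∑ j, Λ j) ≤ Real.log P := by
    rw [hlogsum, Finset.mul_sum]
    exact Finset.sum_le_sum fun j _ => hterm j
  have hlog4 : Real.log 4 = 2 * Real.log 2 := by
    rw [show (4:ℝ) = 2 ^ 2 by norm_num, Real.log_pow]
    push_cast
    ring
  have hnum : Real.log 4 + 4/11 < 1.75 := by
    rw [hlog4]
    nlinarith [Real.log_two_lt_d9]
  have hfin : t * (∑ j, Λ j) < 1.75 := by linarith
  calc (∑ j, Λ j) = (22 * ε ^ 2) * (t * (∑ j, Λ j)) := by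
        rw [← mul_assoc, h22, one_mul]
    _ ≤ (22 * ε ^ 2) * 1.75 := by
        refine mul_le_mul_of_nonneg_left hfin.le (by positivity)
    _ ≤ 39 * ε ^ 2 := by nlinarith

theorem sqnorm_nonneg {d : ℕ} (v : Fin d → ℝ) : 0 ≤ sqnorm v :=
  Finset.sum_nonneg fun i _ => sq_nonneg _

theorem sqnorm_add_le {d : ℕ} (x y : Fin d → ℝ) :
    sqnorm (x + y) ≤ 2 * sqnorm x + 2 * sqnorm y := by
  have : ∀ i : Fin d, (x + y) i ^ 2 ≤ 2 * x i ^ 2 + 2 * y i ^ 2 := by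
    intro i
    have : (x + y) i = x i + y i := rfl
    rw [this]
    nlinarith [sq_nonneg (x i - y i)]
  calc sqnorm (x + y) ≤ ∑ i, (2 * x i ^ 2 + 2 * y i ^ 2) :=
        Finset.sum_le_sum fun i _ => this i
    _ = 2 * sqnorm x + 2 * sqnorm y := by
        rw [Finset.sum_add_distrib, ← Finset.mul_sum, ← Finset.mul_sum]; rfl

theorem sqnorm_mid {d : ℕ} {v w : Fin d → ℝ} {a : ℝ}
    (h1 : sqnorm (v + w) ≤ a) (h2 : sqnorm (v - w) ≤ a) : sqnorm v ≤ a := by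
  have hpt : ∀ i : Fin d, v i ^ 2 ≤ ((v + w) i ^ 2 + (v - w) i ^ 2) / 2 := by
    intro i
    have e1 : (v + w) i = v i + w i := rfl
    have e2 : (v - w) i = v i - w i := rfl
    rw [e1, e2]
    nlinarith [sq_nonneg (w i)]
  have : sqnorm v ≤ (sqnorm (v + w) + sqnorm (v - w)) / 2 := by
    calc sqnorm v ≤ ∑ i, ((v + w) i ^ 2 + (v - w) i ^ 2) / 2 :=
          Finset.sum_le_sum fun i _ => hpt i
      _ = (sqnorm (v + w) + sqnorm (v - w)) / 2 := by
          rw [← Finset.sum_div, Finset.sum_add_distrib]; rfl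
  linarith

theorem sqnorm_mulVec_diag {d : ℕ} {B : Matrix (Fin d) (Fin d) ℝ} {Λ : Fin d → ℝ}
    (hB : Bᵀ * B = Matrix.diagonal Λ) (z : Fin d → ℝ) :
    sqnorm (B.mulVec z) = ∑ j, Λ j * z j ^ 2 := by
  have h1 : sqnorm (B.mulVec z) = B.mulVec z ⬝ᵥ B.mulVec z := by
    simp [sqnorm, dotProduct, sq]
  rw [h1, Matrix.dotProduct_mulVec, ← Matrix.mulVec_transpose, Matrix.mulVec_mulVec, hB]
  simp [dotProduct, Matrix.mulVec_diagonal]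
  exact Finset.sum_congr rfl fun j _ => by ring

theorem diag_nonneg {d : ℕ} {B : Matrix (Fin d) (Fin d) ℝ} {Λ : Fin d → ℝ}
    (hB : Bᵀ * B = Matrix.diagonal Λ) : ∀ j, 0 ≤ Λ j := by
  intro j
  have h := congrFun (congrFun hB j) j
  rw [Matrix.diagonal_apply_eq, Matrix.mul_apply] at h
  rw [← h]
  exact Finset.sum_nonneg fun i _ => by
    rw [Matrix.transpose_apply]
    exact mul_self_nonneg _

theorem exists_diagonalizing {d : ℕ} (A : Matrix (Fin d) (Fin d) ℝ) :
    ∃ (Q : Matrix (Fin d) (Fin d) ℝ) (Λ : Fin d → ℝ),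
      Qᵀ * Q = 1 ∧ (A * Q)ᵀ * (A * Q) = Matrix.diagonal Λ := by
  have hM : (Aᵀ * A).IsHermitian := by
    have := Matrix.isHermitian_conjTranspose_mul_self A
    rwa [Matrix.conjTranspose_eq_transpose_of_trivial] at this
  set Q : Matrix (Fin d) (Fin d) ℝ := ↑(hM.eigenvectorUnitary) with hQdef
  have hstar : star Q = Qᵀ := by
    rw [Matrix.star_eq_conjTranspose, Matrix.conjTranspose_eq_transpose_of_trivial]
  have hQ : Qᵀ * Q = 1 := by
    rw [← hstar]
    exact (Matrix.mem_unitaryGroup_iff').mp hM.eigenvectorUnitary.2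
  refine ⟨Q, hM.eigenvalues, hQ, ?_⟩
  have hdiag := hM.conjStarAlgAut_star_eigenvectorUnitary
  rw [Unitary.conjStarAlgAut_star_apply] at hdiag
  rw [hstar] at hdiag
  have hof : (RCLike.ofReal ∘ hM.eigenvalues : Fin d → ℝ) = hM.eigenvalues := by
    funext j; simp [RCLike.ofReal_real_eq_id]
  rw [hof] at hdiag
  calc (A * Q)ᵀ * (A * Q) = Qᵀ * (Aᵀ * A) * Q := by
        rw [Matrix.transpose_mul]
        noncomm_ring
    _ = Matrix.diagonal hM.eigenvalues := hdiag


/-- `√s ≤ ε ↔ s ≤ ε²` for nonnegative `s, ε`. -/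
theorem sqrt_cond {s ε : ℝ} (hs : 0 ≤ s) (hε : 0 ≤ ε) :
    Real.sqrt s ≤ ε ↔ s ≤ ε ^ 2 := by
  constructor
  · intro h
    calc s = Real.sqrt s ^ 2 := (Real.sq_sqrt hs).symm
      _ ≤ ε ^ 2 := by nlinarith [Real.sqrt_nonneg s]
  · intro h
    calc Real.sqrt s ≤ Real.sqrt (ε ^ 2) := Real.sqrt_le_sqrt h
      _ = ε := Real.sqrt_sq hε

theorem measurable_sqnorm_sub {d : ℕ} (μ : Fin d → ℝ) :
    Measurable fun x : Fin d → ℝ => sqnorm (x - μ) := by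
  have : (fun x : Fin d → ℝ => sqnorm (x - μ)) = fun x => ∑ i, (x i - μ i) ^ 2 := rfl
  rw [this]
  exact Finset.measurable_sum _ fun i _ =>
    (by fun_prop)

end CliffAux

end CliffAux

open CliffAux Real Matrix
open scoped ENNReal

/-- Let `θ ∼ N(μ′, Σ)` be a Gaussian random vector in `ℝ^d`, with
`ℓ_BC(θ) = ½‖θ − μ‖²` and the cliff reward `J` with parameters `C ≫ ε² > 0` and optimum
`θ* = μ`. Then there is a universal constant `c₁ > 0` such that `J(θ*) − E[J(θ)] ≥ C/2`
whenever `E[ℓ_BC(θ)] ≥ c₁·ε²` (assuming `C` is larger than an absolute multiple of `ε²`). -/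
theorem cliff_loss_large_when_bc_loss_large :
    ∃ c₁ K : ℝ, 0 < c₁ ∧ 0 < K ∧
      ∀ (d : ℕ) (ν : Measure (Fin d → ℝ)) (μ' : Fin d → ℝ), IsGaussianLaw ν μ' →
        ∀ (μ : Fin d → ℝ) (ε C : ℝ), 0 < ε → K * ε ^ 2 ≤ C →
          c₁ * ε ^ 2 ≤ ∫ x, (1 / 2) * sqnorm (x - μ) ∂ν →
          cliffJVec μ ε C μ - (∫ x, cliffJVec μ ε C x ∂ν) ≥ C / 2 := by
  refine ⟨640, 1, by norm_num, by norm_num, ?_⟩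
  intro d ν μ' hGauss μ ε C hε hKC hBC
  have hε2 : (0:ℝ) < ε ^ 2 := by positivity
  have hC : (0:ℝ) < C := by nlinarith
  obtain ⟨A, hν⟩ := hGauss
  -- diagonalize
  obtain ⟨Q, Λ, hQ, hBtB⟩ := exists_diagonalizing A
  set B : Matrix (Fin d) (Fin d) ℝ := A * Q with hBdef
  have hΛ0 : ∀ j, 0 ≤ Λ j := diag_nonneg hBtB
  set v : Fin d → ℝ := μ' - μ with hvdef
  set T : (Fin d → ℝ) → (Fin d → ℝ) := fun z => μ' + B.mulVec z with hTdef
  have hTmeas : Measurable T := measurable_const.add (measurable_mulVec B)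
  have hT0meas : Measurable fun z : Fin d → ℝ => μ' + A.mulVec z :=
    measurable_const.add (measurable_mulVec A)
  -- rewrite the law using the rotated matrix B
  have hν' : ν = Measure.map T (stdGaussianPi d) := by
    have h1 : Measure.map (fun z => μ' + A.mulVec z) (stdGaussianPi d)
        = Measure.map ((fun z => μ' + A.mulVec z) ∘ (fun z => Q.mulVec z))
            (stdGaussianPi d) := by
      rw [← Measure.map_map hT0meas (measurable_mulVec Q), map_orth hQ]
    rw [hν, h1]
    congr 1
    funext z
    show μ' + A.mulVec (Q.mulVec z) = μ' + (A * Q).mulVec z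
    rw [Matrix.mulVec_mulVec]
  have hprob : IsProbabilityMeasure ν := by
    rw [hν']
    exact Measure.isProbabilityMeasure_map hTmeas.aemeasurable
  have hTsub : ∀ z : Fin d → ℝ, T z - μ = v + B.mulVec z := by
    intro z
    funext i
    show μ' i + B.mulVec z i - μ i = (μ' i - μ i) + B.mulVec z i
    ring
  -- the key probability bound
  set F : Set (Fin d → ℝ) := {θ | Real.sqrt (sqnorm (θ - μ)) ≤ ε} with hFdef
  have hFmeas : MeasurableSet F :=
    measurableSet_le (measurable_sqnorm_sub μ).sqrt measurable_const
  have hFeq : F = {θ | sqnorm (θ - μ) ≤ ε ^ 2} := by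
    ext θ
    exact sqrt_cond (sqnorm_nonneg _) hε.le
  have hhalf : ν F ≤ 1/2 := by
    by_contra hq
    push_neg at hq
    -- transfer to the standard Gaussian
    set E : Set (Fin d → ℝ) := {z | sqnorm (v + B.mulVec z) ≤ ε ^ 2} with hEdef
    have hEmeas : MeasurableSet E := by
      have : Measurable fun z : Fin d → ℝ => sqnorm (v + B.mulVec z) := by
        have h1 : (fun z : Fin d → ℝ => sqnorm (v + B.mulVec z))
            = fun z => ∑ i, (v i + B.mulVec z i) ^ 2 := rfl
        rw [h1]
        exact Finset.measurable_sum _ fun i _ =>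
          ((measurable_const.add ((measurable_mulVec B).eval)).pow_const 2)
      exact measurableSet_le this measurable_const
    have hE : 1/2 < stdGaussianPi d E := by
      have : ν F = stdGaussianPi d E := by
        rw [hν', Measure.map_apply hTmeas hFmeas]
        congr 1
        ext z
        simp only [Set.mem_preimage, hFdef, Set.mem_setOf_eq, hEdef]
        rw [hTsub z, sqrt_cond (sqnorm_nonneg _) hε.le]
      rwa [this] at hq
    -- reflection: the mean is small
    have hEn : 1/2 < stdGaussianPi d ((fun z : Fin d → ℝ => -z) ⁻¹' E) := by
      have : stdGaussianPi d ((fun z : Fin d → ℝ => -z) ⁻¹' E) = stdGaussianPi d E := by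
        rw [← Measure.map_apply (measurable_neg) hEmeas, map_neg_std]
      rwa [this]
    have hinter : (stdGaussianPi d) (E ∩ (fun z : Fin d → ℝ => -z) ⁻¹' E) ≠ 0 := by
      intro h0
      have hsum := measure_union_add_inter (μ := stdGaussianPi d) E
        (measurable_neg hEmeas)
      rw [h0, add_zero] at hsum
      have h1 : (1:ℝ≥0∞) < stdGaussianPi d E
          + stdGaussianPi d ((fun z : Fin d → ℝ => -z) ⁻¹' E) := by
        calc (1:ℝ≥0∞) = 1/2 + 1/2 := (ENNReal.add_halves 1).symm
          _ < _ := ENNReal.add_lt_add hE hEn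
      rw [← hsum] at h1
      exact absurd h1 (not_lt.mpr prob_le_one)
    obtain ⟨z₀, hz₀⟩ := nonempty_of_measure_ne_zero hinter
    have hz1 : sqnorm (v + B.mulVec z₀) ≤ ε ^ 2 := hz₀.1
    have hz2 : sqnorm (v - B.mulVec z₀) ≤ ε ^ 2 := by
      have := hz₀.2
      simp only [Set.mem_preimage, hEdef, Set.mem_setOf_eq] at this
      rwa [Matrix.mulVec_neg, ← sub_eq_add_neg] at this
    have hv : sqnorm v ≤ ε ^ 2 := sqnorm_mid hz1 hz2
    -- the diagonal quadratic form is small with probability > 1/2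
    have hsub : E ⊆ {z : Fin d → ℝ | (∑ j, Λ j * z j ^ 2) ≤ 4 * ε ^ 2} := by
      intro z hz
      have hz' : sqnorm (v + B.mulVec z) ≤ ε ^ 2 := hz
      simp only [Set.mem_setOf_eq]
      rw [← sqnorm_mulVec_diag hBtB]
      have hrw : B.mulVec z = (v + B.mulVec z) + (-v) := by abel
      rw [hrw]
      have h1 := sqnorm_add_le (v + B.mulVec z) (-v)
      have h2 : sqnorm (-v) = sqnorm v := by
        simp [sqnorm]
      nlinarith [hz', hv]
    have hG : (1/2 : ℝ≥0∞) < stdGaussianPi d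
        {z : Fin d → ℝ | (∑ j, Λ j * z j ^ 2) ≤ 4 * ε ^ 2} :=
      lt_of_lt_of_le hE (measure_mono hsub)
    have hSig : (∑ j, Λ j) ≤ 39 * ε ^ 2 := trace_bound hΛ0 hε hG
    -- second moment bound
    have hmeas2 : Measurable fun z : Fin d → ℝ => (1/2) * sqnorm (v + B.mulVec z) := by
      have h1 : (fun z : Fin d → ℝ => (1/2 : ℝ) * sqnorm (v + B.mulVec z))
          = fun z => (1/2 : ℝ) * ∑ i, (v i + B.mulVec z i) ^ 2 := rfl
      rw [h1]
      exact (Finset.measurable_sum _ fun i _ =>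
        ((measurable_const.add ((measurable_mulVec B).eval)).pow_const 2)).const_mul _
    have hint : ∫ x, (1 / 2) * sqnorm (x - μ) ∂ν ≤ 625 * ε ^ 2 := by
      have e1 : ∫ x, (1 / 2) * sqnorm (x - μ) ∂ν
          = ∫ z, (1/2) * sqnorm (v + B.mulVec z) ∂stdGaussianPi d := by
        rw [hν', integral_map hTmeas.aemeasurable
          ((measurable_sqnorm_sub μ).const_mul _).aestronglyMeasurable]
        exact integral_congr_ae (Filter.Eventually.of_forall fun z => by
          dsimp only
          rw [hTsub z])
      rw [e1]
      have e2 : ∫ z, (1/2) * sqnorm (v + B.mulVec z) ∂stdGaussianPi d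
          = (∫⁻ z, ENNReal.ofReal ((1/2) * sqnorm (v + B.mulVec z))
              ∂stdGaussianPi d).toReal := by
        rw [integral_eq_lintegral_of_nonneg_ae
          (Filter.Eventually.of_forall fun z => mul_nonneg (by norm_num) (sqnorm_nonneg _))
          hmeas2.aestronglyMeasurable]
      rw [e2]
      have e3 : ∫⁻ z, ENNReal.ofReal ((1/2) * sqnorm (v + B.mulVec z)) ∂stdGaussianPi d
          ≤ ENNReal.ofReal (625 * ε ^ 2) := by
        have hpt : ∀ z : Fin d → ℝ, ENNReal.ofReal ((1/2) * sqnorm (v + B.mulVec z))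
            ≤ ENNReal.ofReal (ε ^ 2 + ∑ j, Λ j * z j ^ 2) := by
          intro z
          apply ENNReal.ofReal_le_ofReal
          have h1 := sqnorm_add_le v (B.mulVec z)
          have h2 := sqnorm_mulVec_diag hBtB z
          nlinarith [hv]
        calc ∫⁻ z, ENNReal.ofReal ((1/2) * sqnorm (v + B.mulVec z)) ∂stdGaussianPi d
            ≤ ∫⁻ z, ENNReal.ofReal (ε ^ 2 + ∑ j, Λ j * z j ^ 2) ∂stdGaussianPi d :=
              lintegral_mono hpt
          _ = ∫⁻ z, (ENNReal.ofReal (ε ^ 2)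
                + ∑ j, ENNReal.ofReal (Λ j) * ENNReal.ofReal (z j ^ 2)) ∂stdGaussianPi d := by
              refine lintegral_congr fun z => ?_
              rw [ENNReal.ofReal_add (by positivity)
                (Finset.sum_nonneg fun j _ => mul_nonneg (hΛ0 j) (sq_nonneg _)),
                ENNReal.ofReal_sum_of_nonneg
                  (fun j _ => mul_nonneg (hΛ0 j) (sq_nonneg _))]
              congr 1
              exact Finset.sum_congr rfl fun j _ =>
                ENNReal.ofReal_mul (hΛ0 j)
          _ = ENNReal.ofReal (ε ^ 2)
                + ∑ j, ENNReal.ofReal (Λ j)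
                  * ∫⁻ z, ENNReal.ofReal (z j ^ 2) ∂stdGaussianPi d := by
              rw [lintegral_add_left measurable_const, lintegral_const, measure_univ, mul_one,
                lintegral_finset_sum _ (fun j _ =>
                  (((measurable_pi_apply j).pow_const 2).ennreal_ofReal).const_mul _)]
              congr 1
              exact Finset.sum_congr rfl fun j _ =>
                lintegral_const_mul _ (((measurable_pi_apply j).pow_const 2).ennreal_ofReal)
          _ ≤ ENNReal.ofReal (ε ^ 2)
                + ∑ j, ENNReal.ofReal (Λ j) * ENNReal.ofReal 16 := by
              gcongr with j hj
              have hmap : ∫⁻ z, ENNReal.ofReal (z j ^ 2) ∂stdGaussianPi d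
                  = ∫⁻ x, ENNReal.ofReal (x ^ 2) ∂gaussianReal 0 1 := by
                rw [← map_eval j, lintegral_map
                  (show Measurable fun x : ℝ => ENNReal.ofReal (x ^ 2) from
                    (measurable_id.pow_const 2).ennreal_ofReal) (measurable_pi_apply j)]
              rw [hmap]
              exact lintegral_sq_gauss1_le
          _ ≤ ENNReal.ofReal (625 * ε ^ 2) := by
              have e4 : (∑ j, ENNReal.ofReal (Λ j) * ENNReal.ofReal 16)
                  = ENNReal.ofReal (∑ j, Λ j * 16) := by
                rw [ENNReal.ofReal_sum_of_nonneg (fun j _ => by nlinarith [hΛ0 j])]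
                exact Finset.sum_congr rfl fun j _ => (ENNReal.ofReal_mul (hΛ0 j)).symm
              rw [e4, ← ENNReal.ofReal_add (by positivity)
                (Finset.sum_nonneg fun j _ => by nlinarith [hΛ0 j])]
              apply ENNReal.ofReal_le_ofReal
              rw [← Finset.sum_mul]
              nlinarith [hSig, hε2]
      calc (∫⁻ z, ENNReal.ofReal ((1/2) * sqnorm (v + B.mulVec z)) ∂stdGaussianPi d).toReal
          ≤ (ENNReal.ofReal (625 * ε ^ 2)).toReal :=
            ENNReal.toReal_mono ENNReal.ofReal_ne_top e3
        _ = 625 * ε ^ 2 := ENNReal.toReal_ofReal (by positivity)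
    linarith
  -- conclusion
  have hJopt : cliffJVec μ ε C μ = 0 := by
    unfold cliffJVec
    rw [sub_self]
    have h0 : sqnorm (0 : Fin d → ℝ) = 0 := by simp [sqnorm]
    rw [h0, Real.sqrt_zero, if_pos hε.le, neg_zero]
  have hmeasJ : Measurable (cliffJVec μ ε C) := by
    unfold cliffJVec
    exact Measurable.ite (measurableSet_le (measurable_sqnorm_sub μ).sqrt measurable_const)
      (measurable_sqnorm_sub μ).neg measurable_const
  have hintJ : Integrable (cliffJVec μ ε C) ν := by
    refine Integrable.mono' (integrable_const (ε ^ 2 + C)) hmeasJ.aestronglyMeasurable ?_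
    refine Filter.Eventually.of_forall fun θ => ?_
    unfold cliffJVec
    rw [Real.norm_eq_abs]
    split_ifs with h
    · rw [abs_neg, abs_of_nonneg (sqnorm_nonneg _)]
      have := (sqrt_cond (sqnorm_nonneg (θ - μ)) hε.le).mp h
      linarith
    · rw [abs_neg, abs_of_nonneg hC.le]
      linarith
  have hptJ : ∀ θ, cliffJVec μ ε C θ ≤ (Fᶜ).indicator (fun _ => -C) θ := by
    intro θ
    unfold cliffJVec
    split_ifs with h
    · have hmem : θ ∈ F := h
      rw [Set.indicator_of_notMem (by simpa using hmem)]
      have := sqnorm_nonneg (θ - μ)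
      linarith
    · have hmem : θ ∈ Fᶜ := by simpa [hFdef] using h
      rw [Set.indicator_of_mem hmem]
  have hindint : Integrable ((Fᶜ).indicator (fun _ => -C)) ν :=
    (integrable_const (-C)).indicator hFmeas.compl
  have hcomplR : (1/2 : ℝ) ≤ (ν Fᶜ).toReal := by
    have h1 : (ν F).toReal ≤ 1/2 := by
      have := ENNReal.toReal_mono (by norm_num) hhalf
      simpa using this
    have h2 : (ν Fᶜ).toReal = 1 - (ν F).toReal := by
      rw [prob_compl_eq_one_sub hFmeas,
        ENNReal.toReal_sub_of_le prob_le_one (by norm_num)]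
      simp
    linarith
  have hintle : ∫ x, cliffJVec μ ε C x ∂ν ≤ -(C/2) := by
    calc ∫ x, cliffJVec μ ε C x ∂ν
        ≤ ∫ x, (Fᶜ).indicator (fun _ => -C) x ∂ν :=
          integral_mono hintJ hindint hptJ
      _ = (ν Fᶜ).toReal • (-C) := integral_indicator_const (-C) hFmeas.compl
      _ ≤ -(C/2) := by
          rw [smul_eq_mul]
          nlinarith [hcomplR, hC]
  rw [hJopt]
  linarith
end

section
/- Consider the one-dimensional cliff loss J with parameters C ≫ ε² > 0 and the mean-estimation SGD iterates with σ² = 1, b ≤ 1, a constant step size η ≥ c₁·ε², and let γ ≤ c₂·ε² with (1−γ)^{2T} ≤ γ (for suitable universal constants c₁, c₂). Then there exists a universal constant c₉ > 0 such that, even though E[J(θ*) − J(θ^{(T)})] ≥ C/2, the random SGD iterate satisfies P(J(θ*) − J(θ^{(T)}) ≤ γ) ≥ c₉·γ/η; that is, with probability at least Ω(γ/η) the un-averaged SGD iterate performs as well as the EMA iterate. -/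
open MeasureTheory ProbabilityTheory Real
open scoped ENNReal NNReal

/-- The SGD error iterates for mean estimation: `δ^{(0)} = δ0` and
`δ^{(t)} = (1−η)·δ^{(t−1)} − η·w^{(t−1)}`. -/
noncomputable def sgdErr {Ω : Type*} (η δ0 : ℝ) (w : ℕ → Ω → ℝ) : ℕ → Ω → ℝ
  | 0 => fun _ => δ0
  | (t + 1) => fun ω => (1 - η) * sgdErr η δ0 w t ω - η * w t ω

/-- The EMA error iterates: `δ̃^{(0)} = δ^{(0)}` and
`δ̃^{(t)} = (1−γ)·δ̃^{(t−1)} + γ·δ^{(t)}`. -/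
noncomputable def emaErr {Ω : Type*} (γ : ℝ) (δ : ℕ → Ω → ℝ) : ℕ → Ω → ℝ
  | 0 => δ 0
  | (t + 1) => fun ω => (1 - γ) * emaErr γ δ t ω + γ * δ (t + 1) ω

/-- The one-dimensional cliff reward with target `μ` and parameters `ε, C`:
`J(θ) = −(θ−μ)²` if `|θ − μ| ≤ ε`, and `J(θ) = −C` otherwise. In particular `J(μ) = 0`. -/
noncomputable def cliffJ (μ ε C θ : ℝ) : ℝ := if |θ - μ| ≤ ε then -(θ - μ) ^ 2 else -C



set_option linter.unusedSectionVars false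

lemma gauss_pdf_conv (m₁ m₂ : ℝ) (v₁ v₂ : ℝ) (h₁ : 0 < v₁) (h₂ : 0 < v₂) (z : ℝ) :
    ∫ x : ℝ, (√(2 * π * v₁))⁻¹ * rexp (- (x - m₁)^2 / (2 * v₁)) *
      ((√(2 * π * v₂))⁻¹ * rexp (- (z - x - m₂)^2 / (2 * v₂))) =
    (√(2 * π * (v₁ + v₂)))⁻¹ * rexp (- (z - (m₁ + m₂))^2 / (2 * (v₁ + v₂))) := by
  have hv : 0 < v₁ + v₂ := by linarith
  set p : ℝ := (v₁ + v₂) / (2 * v₁ * v₂) with hp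
  have hp0 : 0 < p := by positivity
  set q : ℝ := m₁ + v₁ * (z - m₁ - m₂) / (v₁ + v₂) with hq
  have key : ∀ x : ℝ, - (x - m₁)^2 / (2 * v₁) + - (z - x - m₂)^2 / (2 * v₂)
      = -p * (x - q)^2 + - (z - (m₁ + m₂))^2 / (2 * (v₁ + v₂)) := by
    intro x
    rw [hp, hq]
    field_simp
    ring
  have step1 : ∀ x : ℝ,
      (√(2 * π * v₁))⁻¹ * rexp (- (x - m₁)^2 / (2 * v₁)) *
      ((√(2 * π * v₂))⁻¹ * rexp (- (z - x - m₂)^2 / (2 * v₂)))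
      = ((√(2 * π * v₁))⁻¹ * (√(2 * π * v₂))⁻¹ * rexp (- (z - (m₁ + m₂))^2 / (2 * (v₁ + v₂))))
        * rexp (-p * (x - q)^2) := by
    intro x
    rw [mul_mul_mul_comm, ← Real.exp_add, key x, Real.exp_add]
    ring
  simp_rw [step1]
  rw [MeasureTheory.integral_const_mul]
  have : ∫ x : ℝ, rexp (-p * (x - q)^2) = √(π / p) := by
    rw [← integral_gaussian p]
    exact MeasureTheory.integral_sub_right_eq_self (fun x => rexp (-p * x^2)) q
  rw [this]
  have hconst : (√(2 * π * v₁))⁻¹ * (√(2 * π * v₂))⁻¹ * √(π / p)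
      = (√(2 * π * (v₁ + v₂)))⁻¹ := by
    rw [← Real.sqrt_inv, ← Real.sqrt_inv, ← Real.sqrt_mul (by positivity),
      ← Real.sqrt_mul (by positivity), ← Real.sqrt_inv]
    congr 1
    rw [hp]
    field_simp
  rw [← hconst]
  ring

lemma gaussianPDFReal_le (m : ℝ) (v : ℝ≥0) (x : ℝ) :
    gaussianPDFReal m v x ≤ (√(2 * π * v))⁻¹ := by
  rw [gaussianPDFReal]
  have h1 : rexp (- (x - m)^2 / (2 * v)) ≤ 1 := by
    rw [Real.exp_le_one_iff]
    by_cases hv : (v:ℝ) = 0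
    · simp [hv]
    · have : 0 < (v:ℝ) := lt_of_le_of_ne v.2 (Ne.symm hv)
      have := sq_nonneg (x - m)
      apply div_nonpos_of_nonpos_of_nonneg <;> [linarith; positivity]
  nth_rewrite 2 [← mul_one ((√(2 * π * v))⁻¹)]
  exact mul_le_mul_of_nonneg_left h1 (by positivity)

lemma continuous_gaussianPDFReal (m : ℝ) (v : ℝ≥0) : Continuous (gaussianPDFReal m v) := by
  unfold gaussianPDFReal
  fun_prop

lemma gaussianPDFReal_conv (m₁ m₂ : ℝ) {v₁ v₂ : ℝ≥0} (h₁ : v₁ ≠ 0) (h₂ : v₂ ≠ 0) (z : ℝ) :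
    ∫ x : ℝ, gaussianPDFReal m₁ v₁ x * gaussianPDFReal m₂ v₂ (z - x) =
      gaussianPDFReal (m₁ + m₂) (v₁ + v₂) z := by
  have hv₁ : (0:ℝ) < v₁ := lt_of_le_of_ne v₁.2 (by exact_mod_cast Ne.symm h₁)
  have hv₂ : (0:ℝ) < v₂ := lt_of_le_of_ne v₂.2 (by exact_mod_cast Ne.symm h₂)
  have := gauss_pdf_conv m₁ m₂ v₁ v₂ hv₁ hv₂ z
  simp only [gaussianPDFReal]
  push_cast
  convert this using 3

lemma dirac_conv_eq (a : ℝ) (ν : Measure ℝ) [SFinite ν] :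
    Measure.conv (Measure.dirac a) ν = ν.map (a + ·) := by
  show Measure.map _ _ = _
  rw [Measure.dirac_prod, Measure.map_map (by fun_prop) (by fun_prop)]
  rfl

lemma conv_dirac_eq (a : ℝ) (ν : Measure ℝ) [SFinite ν] :
    Measure.conv ν (Measure.dirac a) = ν.map (· + a) := by
  show Measure.map _ _ = _
  rw [Measure.prod_dirac, Measure.map_map (by fun_prop) (by fun_prop)]
  rfl

lemma gaussianReal_conv_gaussianReal (m₁ m₂ : ℝ) (v₁ v₂ : ℝ≥0) :
    Measure.conv (gaussianReal m₁ v₁) (gaussianReal m₂ v₂) = gaussianReal (m₁ + m₂) (v₁ + v₂) := by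
  by_cases h₁ : v₁ = 0
  · subst h₁
    rw [gaussianReal_zero_var, dirac_conv_eq, gaussianReal_map_const_add]
    rw [add_comm m₂ m₁, zero_add]
  by_cases h₂ : v₂ = 0
  · subst h₂
    rw [gaussianReal_zero_var, conv_dirac_eq, gaussianReal_map_add_const]
    rw [add_zero]
  -- main case
  have h₁₂ : v₁ + v₂ ≠ 0 := by simp [h₁]
  have hpdf₂m : Measurable (gaussianPDF m₂ v₂) := measurable_gaussianPDF _ _
  have hpdf₁m : Measurable (gaussianPDF m₁ v₁) := measurable_gaussianPDF _ _
  ext s hs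
  have hind : Measurable (s.indicator (1 : ℝ → ℝ≥0∞)) := measurable_one.indicator hs
  show Measure.map (fun p : ℝ × ℝ => p.1 + p.2) _ s = _
  rw [Measure.map_apply (by fun_prop) hs, Measure.prod_apply (by exact measurable_add hs)]
  have hstep : ∀ x : ℝ, gaussianReal m₂ v₂ (Prod.mk x ⁻¹' ((fun p : ℝ × ℝ => p.1 + p.2) ⁻¹' s))
      = ∫⁻ z, s.indicator 1 z * gaussianPDF m₂ v₂ (z - x) := by
    intro x
    rw [gaussianReal_of_var_ne_zero _ h₂, withDensity_apply' _ _]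
    have hset : (Prod.mk x ⁻¹' ((fun p : ℝ × ℝ => p.1 + p.2) ⁻¹' s)) = {y : ℝ | x + y ∈ s} := rfl
    rw [hset, ← lintegral_indicator (by exact measurable_const_add x hs) _]
    have : ∀ y : ℝ, ({y : ℝ | x + y ∈ s}).indicator (gaussianPDF m₂ v₂) y
        = (fun z => s.indicator 1 z * gaussianPDF m₂ v₂ (z - x)) (x + y) := by
      intro y
      by_cases hy : x + y ∈ s <;>
        simp [Set.indicator, hy, add_sub_cancel_left]
    simp_rw [this]
    exact MeasureTheory.lintegral_add_left_eq_self (μ := volume)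
      (fun z => s.indicator 1 z * gaussianPDF m₂ v₂ (z - x)) x
  simp_rw [hstep]
  have hinner_meas : ∀ x : ℝ, Measurable (fun z => s.indicator 1 z * gaussianPDF m₂ v₂ (z - x)) :=
    fun x => hind.mul (hpdf₂m.comp (measurable_id.sub measurable_const))
  have huncurry : Measurable (Function.uncurry fun (x z : ℝ) =>
      gaussianPDF m₁ v₁ x * (s.indicator 1 z * gaussianPDF m₂ v₂ (z - x))) := by
    apply Measurable.mul
    · exact hpdf₁m.comp measurable_fst
    · exact (hind.comp measurable_snd).mul
        (hpdf₂m.comp (measurable_snd.sub measurable_fst))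
  rw [gaussianReal_of_var_ne_zero _ h₁,
    lintegral_withDensity_eq_lintegral_mul _ hpdf₁m (by
      apply Measurable.lintegral_prod_right (f := fun (x z : ℝ) =>
        s.indicator 1 z * gaussianPDF m₂ v₂ (z - x))
      exact (hind.comp measurable_snd).mul (hpdf₂m.comp (measurable_snd.sub measurable_fst)))]
  simp only [Pi.mul_apply]
  have hswap : (∫⁻ x, gaussianPDF m₁ v₁ x * ∫⁻ z, s.indicator 1 z * gaussianPDF m₂ v₂ (z - x))
      = ∫⁻ z, s.indicator 1 z * ∫⁻ x, gaussianPDF m₁ v₁ x * gaussianPDF m₂ v₂ (z - x) := by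
    calc (∫⁻ x, gaussianPDF m₁ v₁ x * ∫⁻ z, s.indicator 1 z * gaussianPDF m₂ v₂ (z - x))
        = ∫⁻ x, ∫⁻ z, gaussianPDF m₁ v₁ x * (s.indicator 1 z * gaussianPDF m₂ v₂ (z - x)) := by
          congr 1; funext x
          rw [lintegral_const_mul _ (hinner_meas x)]
      _ = ∫⁻ z, ∫⁻ x, gaussianPDF m₁ v₁ x * (s.indicator 1 z * gaussianPDF m₂ v₂ (z - x)) :=
          lintegral_lintegral_swap huncurry.aemeasurable
      _ = ∫⁻ z, s.indicator 1 z * ∫⁻ x, gaussianPDF m₁ v₁ x * gaussianPDF m₂ v₂ (z - x) := by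
          congr 1; funext z
          have hmul : Measurable fun x : ℝ => gaussianPDF m₁ v₁ x * gaussianPDF m₂ v₂ (z - x) :=
            hpdf₁m.mul (hpdf₂m.comp (measurable_const.sub measurable_id))
          rw [← lintegral_const_mul _ hmul]
          congr 1; funext x; ring
  rw [hswap]
  have hinner : ∀ z : ℝ, (∫⁻ x, gaussianPDF m₁ v₁ x * gaussianPDF m₂ v₂ (z - x))
      = gaussianPDF (m₁ + m₂) (v₁ + v₂) z := by
    intro z
    have hnn : 0 ≤ᵐ[volume] fun x => gaussianPDFReal m₁ v₁ x * gaussianPDFReal m₂ v₂ (z - x) :=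
      Filter.Eventually.of_forall fun x =>
        mul_nonneg (gaussianPDFReal_nonneg _ _ _) (gaussianPDFReal_nonneg _ _ _)
    have hint : Integrable (fun x => gaussianPDFReal m₁ v₁ x * gaussianPDFReal m₂ v₂ (z - x)) := by
      have hcont : Continuous fun x : ℝ => gaussianPDFReal m₂ v₂ (z - x) :=
        (continuous_gaussianPDFReal m₂ v₂).comp (continuous_const.sub continuous_id)
      have := (integrable_gaussianPDFReal m₁ v₁).bdd_mul
        (f := fun x : ℝ => gaussianPDFReal m₂ v₂ (z - x))
        (c := (√(2 * π * v₂))⁻¹) hcont.aestronglyMeasurable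
        (Filter.Eventually.of_forall fun x => by
          rw [Real.norm_eq_abs, abs_of_nonneg (gaussianPDFReal_nonneg _ _ _)]
          exact gaussianPDFReal_le _ _ _)
      simpa [mul_comm] using this
    calc (∫⁻ x, gaussianPDF m₁ v₁ x * gaussianPDF m₂ v₂ (z - x))
        = ∫⁻ x, ENNReal.ofReal (gaussianPDFReal m₁ v₁ x * gaussianPDFReal m₂ v₂ (z - x)) := by
          simp_rw [gaussianPDF, ENNReal.ofReal_mul (gaussianPDFReal_nonneg m₁ v₁ _)]
      _ = ENNReal.ofReal (∫ x, gaussianPDFReal m₁ v₁ x * gaussianPDFReal m₂ v₂ (z - x)) :=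
          (ofReal_integral_eq_lintegral_ofReal hint hnn).symm
      _ = gaussianPDF (m₁ + m₂) (v₁ + v₂) z := by
          rw [gaussianPDFReal_conv m₁ m₂ h₁ h₂ z]; rfl
  simp_rw [hinner]
  have : ∀ z : ℝ, s.indicator 1 z * gaussianPDF (m₁ + m₂) (v₁ + v₂) z
      = s.indicator (gaussianPDF (m₁ + m₂) (v₁ + v₂)) z := by
    intro z
    by_cases hz : z ∈ s <;> simp [Set.indicator, hz]
  simp_rw [this]
  rw [lintegral_indicator hs _, gaussianReal_apply _ h₁₂ s]

section Law
variable {Ω : Type} [MeasureSpace Ω] [IsProbabilityMeasure (ℙ : Measure Ω)]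

lemma indep_gauss_add {X Y : Ω → ℝ} {m₁ m₂ : ℝ} {v₁ v₂ : ℝ≥0} (h : IndepFun X Y ℙ)
    (hX : Measure.map X ℙ = gaussianReal m₁ v₁) (hY : Measure.map Y ℙ = gaussianReal m₂ v₂) :
    Measure.map (fun ω => X ω + Y ω) ℙ = gaussianReal (m₁ + m₂) (v₁ + v₂) := by
  have hXm : AEMeasurable X ℙ := aemeasurable_of_map_neZero (by rw [hX]; infer_instance)
  have hYm : AEMeasurable Y ℙ := aemeasurable_of_map_neZero (by rw [hY]; infer_instance)
  have hp : Measure.map (fun ω => (X ω, Y ω)) ℙ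
      = (Measure.map X ℙ).prod (Measure.map Y ℙ) :=
    (indepFun_iff_map_prod_eq_prod_map_map hXm hYm).mp h
  have hcomp : Measure.map (fun ω => X ω + Y ω) ℙ
      = Measure.map (fun p : ℝ × ℝ => p.1 + p.2) (Measure.map (fun ω => (X ω, Y ω)) ℙ) := by
    rw [AEMeasurable.map_map_of_aemeasurable (by fun_prop) (hXm.prodMk hYm)]
    rfl
  rw [hcomp, hp, hX, hY]
  exact gaussianReal_conv_gaussianReal m₁ m₂ v₁ v₂

/-- `sgdErr` as a function of finitely many noise coordinates. -/
noncomputable def gfun (η δ0 : ℝ) : ℕ → (ℕ → ℝ) → ℝ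
  | 0 => fun _ => δ0
  | (t + 1) => fun x => (1 - η) * gfun η δ0 t x - η * x t

lemma gfun_measurable (η δ0 : ℝ) (t : ℕ) : Measurable (gfun η δ0 t) := by
  induction t with
  | zero => exact measurable_const
  | succ t ih =>
      exact ((ih.const_mul _).sub ((measurable_pi_apply t).const_mul _))

lemma gfun_congr (η δ0 : ℝ) (t : ℕ) (x y : ℕ → ℝ) (h : ∀ i, i < t → x i = y i) :
    gfun η δ0 t x = gfun η δ0 t y := by
  induction t with
  | zero => rfl
  | succ t ih =>
      show (1 - η) * gfun η δ0 t x - η * x t = (1 - η) * gfun η δ0 t y - η * y t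
      rw [ih (fun i hi => h i (Nat.lt_succ_of_lt hi)), h t (Nat.lt_succ_self t)]

lemma sgdErr_eq_gfun (η δ0 : ℝ) (w : ℕ → Ω → ℝ) (t : ℕ) (ω : Ω) :
    sgdErr η δ0 w t ω = gfun η δ0 t (fun i => w i ω) := by
  induction t with
  | zero => rfl
  | succ t ih => show (1 - η) * sgdErr η δ0 w t ω - η * w t ω = _; rw [ih]; rfl

lemma sgdErr_indep (η δ0 : ℝ) (w : ℕ → Ω → ℝ) (hm : ∀ i, Measurable (w i))
    (hi : iIndepFun w ℙ) (t : ℕ) :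
    IndepFun (sgdErr η δ0 w t) (w t) ℙ := by
  classical
  have hdisj : Disjoint (Finset.range t) ({t} : Finset ℕ) := by
    simp [Finset.disjoint_singleton_right]
  have hfin := hi.indepFun_finset (Finset.range t) {t} hdisj hm
  set φ : ((i : (Finset.range t : Finset ℕ)) → ℝ) → ℝ :=
    fun v => gfun η δ0 t (fun i => if h : i ∈ Finset.range t then v ⟨i, h⟩ else 0) with hφ
  have hφm : Measurable φ := by
    apply (gfun_measurable η δ0 t).comp
    apply measurable_pi_lambda
    intro i
    by_cases h : i ∈ Finset.range t
    · simp only [dif_pos h]; exact measurable_pi_apply _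
    · simp only [dif_neg h]; exact measurable_const
  set ψ : ((i : ({t} : Finset ℕ)) → ℝ) → ℝ := fun v => v ⟨t, Finset.mem_singleton_self t⟩ with hψ
  have hψm : Measurable ψ := measurable_pi_apply _
  have := hfin.comp hφm hψm
  have heq1 : (φ ∘ fun a (i : (Finset.range t : Finset ℕ)) => w i a) = sgdErr η δ0 w t := by
    funext ω
    show gfun η δ0 t _ = sgdErr η δ0 w t ω
    rw [sgdErr_eq_gfun η δ0 w t ω]
    apply gfun_congr
    intro i hi2
    simp [Finset.mem_range.mpr hi2]
  have heq2 : (ψ ∘ fun a (i : ({t} : Finset ℕ)) => w i a) = w t := rfl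
  rwa [heq1, heq2] at this

/-- The variance sequence of the SGD iterates. -/
noncomputable def gv (η : ℝ) : ℕ → ℝ≥0
  | 0 => 0
  | (t + 1) => ⟨(1 - η)^2, sq_nonneg _⟩ * gv η t + ⟨η^2, sq_nonneg _⟩

lemma sgdErr_law (η δ0 : ℝ) (w : ℕ → Ω → ℝ) (hm : ∀ i, Measurable (w i))
    (hi : iIndepFun w ℙ)
    (hl : ∀ t, Measure.map (w t) ℙ = gaussianReal 0 1) (T : ℕ) :
    Measure.map (sgdErr η δ0 w T) ℙ = gaussianReal ((1 - η)^T * δ0) (gv η T) := by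
  induction T with
  | zero =>
      show Measure.map (fun _ => δ0) ℙ = _
      rw [Measure.map_const]
      simp [gv]
  | succ t ih =>
      have hI : IndepFun (fun ω => (1 - η) * sgdErr η δ0 w t ω) (fun ω => -η * w t ω) ℙ := by
        have := (sgdErr_indep η δ0 w hm hi t).comp
          (measurable_const_mul (1 - η)) (measurable_const_mul (-η))
        exact this
      have hA := (gaussianReal_const_mul ⟨aemeasurable_of_map_neZero (by rw [ih]; infer_instance), ih⟩ (1 - η)).map_eq
      have hB := (gaussianReal_const_mul ⟨aemeasurable_of_map_neZero (by rw [hl t]; infer_instance), hl t⟩ (-η)).map_eq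
      have hsum := indep_gauss_add hI hA hB
      have heq : sgdErr η δ0 w (t + 1)
          = fun ω => (1 - η) * sgdErr η δ0 w t ω + -η * w t ω := by
        funext ω
        show (1 - η) * sgdErr η δ0 w t ω - η * w t ω = _
        ring
      rw [heq, hsum]
      congr 1
      · rw [pow_succ]; ring
      · apply NNReal.coe_injective
        simp only [gv, NNReal.coe_add, NNReal.coe_mul, NNReal.coe_mk, NNReal.coe_one, mul_one]
        change _ = (1 - η) ^ 2 * (gv η t : ℝ) + η ^ 2
        ring

end Law

section AE
variable {Ω : Type} [MeasureSpace Ω] [IsProbabilityMeasure (ℙ : Measure Ω)]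

lemma iIndepFun_congr_ae {w w' : ℕ → Ω → ℝ} (hae : ∀ i, w i =ᵐ[ℙ] w' i)
    (h : iIndepFun w ℙ) :
    iIndepFun w' ℙ := by
  rw [iIndepFun_iff_measure_inter_preimage_eq_mul] at h ⊢
  intro S sets hsets
  have hterm : ∀ i ∈ S, ℙ (w i ⁻¹' sets i) = ℙ (w' i ⁻¹' sets i) := by
    intro i _
    apply measure_congr
    filter_upwards [hae i] with ω hω
    show (ω ∈ w i ⁻¹' sets i) = (ω ∈ w' i ⁻¹' sets i)
    simp only [Set.mem_preimage, hω]
  have hint : ℙ (⋂ i ∈ S, w i ⁻¹' sets i) = ℙ (⋂ i ∈ S, w' i ⁻¹' sets i) := by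
    apply measure_congr
    have hall : ∀ᵐ ω ∂ℙ, ∀ i ∈ S, w i ω = w' i ω :=
      (Filter.eventually_all_finset S).2 fun i _ => hae i
    filter_upwards [hall] with ω hω
    show (ω ∈ ⋂ i ∈ S, w i ⁻¹' sets i) = (ω ∈ ⋂ i ∈ S, w' i ⁻¹' sets i)
    simp only [Set.mem_iInter, Set.mem_preimage, eq_iff_iff]
    exact ⟨fun hm i hiS => by rw [← hω i hiS]; exact hm i hiS,
      fun hm i hiS => by rw [hω i hiS]; exact hm i hiS⟩
  rw [← hint, h S hsets]
  exact Finset.prod_congr rfl hterm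

lemma sgdErr_congr_ae (η δ0 : ℝ) {w w' : ℕ → Ω → ℝ} (hae : ∀ i, w i =ᵐ[ℙ] w' i) (T : ℕ) :
    sgdErr η δ0 w T =ᵐ[ℙ] sgdErr η δ0 w' T := by
  induction T with
  | zero => rfl
  | succ t ih =>
      filter_upwards [ih, hae t] with ω h1 h2
      show (1 - η) * sgdErr η δ0 w t ω - η * w t ω
        = (1 - η) * sgdErr η δ0 w' t ω - η * w' t ω
      rw [h1, h2]

end AE

lemma gv_coe (η : ℝ) (hη : η ≠ 2) (T : ℕ) :
    (gv η T : ℝ) = η * (1 - (1 - η)^(2*T)) / (2 - η) := by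
  have h2 : (2 : ℝ) - η ≠ 0 := by intro h; apply hη; linarith
  induction T with
  | zero => simp [gv]
  | succ t ih =>
      have hcoe : (gv η (t+1) : ℝ) = (1 - η)^2 * (gv η t : ℝ) + η^2 := by
        rfl
      have hpow : (1 - η)^(2*(t+1)) = (1 - η)^(2*t) * (1 - η)^2 := by
        rw [← pow_add]
        congr 1
      rw [hcoe, ih, hpow]
      field_simp
      ring

lemma gauss_Icc_le (m : ℝ) {v : ℝ≥0} (hv : v ≠ 0) {a b : ℝ} (hab : a ≤ b) :
    ((gaussianReal m v) (Set.Icc a b)).toReal ≤ (b - a) * (√(2 * π * v))⁻¹ := by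
  rw [gaussianReal_apply_eq_integral _ hv, ENNReal.toReal_ofReal
    (setIntegral_nonneg measurableSet_Icc (fun x _ => gaussianPDFReal_nonneg _ _ _))]
  have hle : ∀ x ∈ Set.Icc a b, gaussianPDFReal m v x ≤ (√(2 * π * v))⁻¹ := by
    intro x _
    rw [gaussianPDFReal]
    have h1 : rexp (- (x - m)^2 / (2 * v)) ≤ 1 := by
      rw [Real.exp_le_one_iff]
      have hv' : (0:ℝ) < v := lt_of_le_of_ne v.2 (by exact_mod_cast Ne.symm hv)
      have := sq_nonneg (x - m)
      apply div_nonpos_of_nonpos_of_nonneg <;> [linarith; positivity]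
    nth_rewrite 2 [← mul_one ((√(2 * π * v))⁻¹)]
    exact mul_le_mul_of_nonneg_left h1 (by positivity)
  calc ∫ x in Set.Icc a b, gaussianPDFReal m v x
      ≤ ∫ _x in Set.Icc a b, (√(2 * π * v))⁻¹ := by
        apply setIntegral_mono_on (integrable_gaussianPDFReal m v).integrableOn
          (integrableOn_const measure_Icc_lt_top.ne) measurableSet_Icc hle
    _ = (b - a) * (√(2 * π * v))⁻¹ := by
        rw [setIntegral_const, Real.volume_real_Icc_of_le (by linarith), smul_eq_mul]

lemma gauss_Icc_ge (m : ℝ) {v : ℝ≥0} (hv : v ≠ 0) {r : ℝ} (hr : 0 ≤ r) :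
    2 * r * ((√(2 * π * v))⁻¹ * rexp (- (r + |m|)^2 / (2 * v)))
      ≤ ((gaussianReal m v) (Set.Icc (-r) r)).toReal := by
  have hv' : (0:ℝ) < v := lt_of_le_of_ne v.2 (by exact_mod_cast Ne.symm hv)
  rw [gaussianReal_apply_eq_integral _ hv, ENNReal.toReal_ofReal
    (setIntegral_nonneg measurableSet_Icc (fun x _ => gaussianPDFReal_nonneg _ _ _))]
  have hle : ∀ x ∈ Set.Icc (-r) r,
      (√(2 * π * v))⁻¹ * rexp (- (r + |m|)^2 / (2 * v)) ≤ gaussianPDFReal m v x := by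
    intro x hx
    rw [gaussianPDFReal]
    apply mul_le_mul_of_nonneg_left _ (by positivity)
    apply Real.exp_le_exp.mpr
    have hsq : (x - m)^2 ≤ (r + |m|)^2 := by
      have hx1 : |x| ≤ r := abs_le.mpr ⟨hx.1, hx.2⟩
      have h2 : |x - m| ≤ r + |m| := (abs_sub x m).trans (add_le_add hx1 le_rfl)
      calc (x - m)^2 = |x - m|^2 := (sq_abs _).symm
        _ ≤ (r + |m|)^2 := pow_le_pow_left₀ (abs_nonneg _) h2 2
    exact (div_le_div_iff_of_pos_right (by positivity)).mpr (neg_le_neg hsq)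
  calc 2 * r * ((√(2 * π * v))⁻¹ * rexp (- (r + |m|)^2 / (2 * v)))
      = ∫ _x in Set.Icc (-r) r, (√(2 * π * v))⁻¹ * rexp (- (r + |m|)^2 / (2 * v)) := by
        rw [setIntegral_const, Real.volume_real_Icc_of_le (by linarith), smul_eq_mul]
        ring
    _ ≤ ∫ x in Set.Icc (-r) r, gaussianPDFReal m v x :=
        setIntegral_mono_on (integrableOn_const measure_Icc_lt_top.ne)
          (integrable_gaussianPDFReal m v).integrableOn measurableSet_Icc hle

lemma sgdErr_measurable {Ω : Type} [MeasureSpace Ω] (η δ0 : ℝ) {w : ℕ → Ω → ℝ}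
    (hm : ∀ i, Measurable (w i)) (T : ℕ) : Measurable (sgdErr η δ0 w T) := by
  induction T with
  | zero => exact measurable_const
  | succ t ih => exact (ih.const_mul _).sub ((hm t).const_mul _)



set_option maxHeartbeats 2000000 in
/-- For the one-dimensional cliff loss `J` with parameters `C ≫ ε² > 0` and the
mean-estimation SGD iterates with `σ² = 1`, `b ≤ 1`, a constant step size `η ≥ c₁ε²`, and
`γ ≤ c₂ε²` with `(1−γ)^{2T} ≤ γ` (for suitable universal constants `c₁, c₂`): there is a
universal constant `c₉ > 0` such that, even though `E[J(θ*) − J(θ^{(T)})] ≥ C/2`, the random SGD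
iterate satisfies `P(J(θ*) − J(θ^{(T)}) ≤ γ) ≥ c₉·γ/η`. -/
theorem cliff_loss_sgd_good_with_small_probability :
    ∃ c₁ c₂ c₉ : ℝ, 0 < c₁ ∧ 0 < c₂ ∧ 0 < c₉ ∧
      ∀ (Ω : Type) (_ : MeasureSpace Ω) (_ : IsProbabilityMeasure (ℙ : Measure Ω))
        (w : ℕ → Ω → ℝ),
        iIndepFun w ℙ →
        (∀ t, Measure.map (w t) ℙ = gaussianReal 0 1) →
        ∀ (μ ε C η γ δ0 b : ℝ) (T : ℕ),
          0 < ε → ε ^ 2 ≤ C →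
          η ∈ Set.Ioc (0 : ℝ) (1 / 2) → γ ∈ Set.Ioc (0 : ℝ) (1 / 2) →
          |δ0| = b → b ≤ 1 →
          c₁ * ε ^ 2 ≤ η → γ ≤ c₂ * ε ^ 2 → (1 - γ) ^ (2 * T) ≤ γ →
          (∫ ω, (cliffJ μ ε C μ - cliffJ μ ε C (μ + sgdErr η δ0 w T ω))) ≥ C / 2 ∧
          (ℙ {ω | cliffJ μ ε C μ - cliffJ μ ε C (μ + sgdErr η δ0 w T ω) ≤ γ}).toReal ≥
            c₉ * γ / η := by
  refine ⟨100, 1/100, 1/3, by norm_num, by norm_num, by norm_num, ?_⟩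
  intro Ω _ _ w hindep hlaw μ ε C η γ δ0 b T hε hεC hηm hγm hb hb1 hc1 hc2 h2T
  obtain ⟨hηpos, hη2⟩ := hηm
  obtain ⟨hγpos, hγ2⟩ := hγm
  -- basic facts
  have hCpos : 0 < C := lt_of_lt_of_le (by positivity) hεC
  have hγη : γ ≤ η / 10000 := by nlinarith
  have hγleη : γ ≤ η := le_trans hγη (by linarith)
  have hpowγ : (1 - η)^(2*T) ≤ γ :=
    le_trans (pow_le_pow_left₀ (by linarith) (by linarith) _) h2T
  -- measurable modification of the noise
  have hwm : ∀ t, AEMeasurable (w t) ℙ := fun t =>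
    aemeasurable_of_map_neZero (by rw [hlaw t]; infer_instance)
  set w' : ℕ → Ω → ℝ := fun t => (hwm t).mk (w t) with hw'def
  have hw'm : ∀ t, Measurable (w' t) := fun t => (hwm t).measurable_mk
  have hae : ∀ t, w t =ᵐ[ℙ] w' t := fun t => (hwm t).ae_eq_mk
  have hlaw' : ∀ t, Measure.map (w' t) ℙ = gaussianReal 0 1 := fun t => by
    rw [← Measure.map_congr (hae t), hlaw t]
  have hindep' := iIndepFun_congr_ae hae hindep
  set δ' : Ω → ℝ := sgdErr η δ0 w' T with hδ'def
  have hδ'meas : Measurable δ' := sgdErr_measurable η δ0 hw'm T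
  have hδae : sgdErr η δ0 w T =ᵐ[ℙ] δ' := sgdErr_congr_ae η δ0 hae T
  set m : ℝ := (1 - η)^T * δ0 with hmdef
  set v : ℝ≥0 := gv η T with hvdef
  have hδlaw : Measure.map δ' ℙ = gaussianReal m v :=
    sgdErr_law η δ0 w' hw'm hindep' hlaw' T
  have hVeq : (v : ℝ) = η * (1 - (1 - η)^(2*T)) / (2 - η) := gv_coe η (by linarith) T
  clear_value w' δ'
  -- variance bounds
  clear_value v
  have hVlb : η / 4 ≤ (v : ℝ) := by
    rw [hVeq, le_div_iff₀ (by linarith)]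
    nlinarith
  have hVub : (v : ℝ) ≤ η := by
    rw [hVeq, div_le_iff₀ (by linarith)]
    have hpow0 : (0:ℝ) ≤ (1 - η)^(2*T) := pow_nonneg (by linarith) _
    nlinarith
  have hVpos : (0:ℝ) < (v : ℝ) := by linarith
  have hv0 : v ≠ 0 := by
    intro h
    rw [h] at hVpos
    norm_num at hVpos
  -- mean bound
  have hsγ : (0:ℝ) ≤ √γ := Real.sqrt_nonneg γ
  have hmb : |m| ≤ √γ := by
    have hTnn : (0:ℝ) ≤ 1 - η := by linarith
    have h1 : |m| = (1 - η)^T * |δ0| := by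
      rw [hmdef, abs_mul, abs_of_nonneg (pow_nonneg hTnn T)]
    have h2 : (1 - η)^T ≤ √γ := by
      have hsq : ((1 - η)^T)^2 ≤ γ := by
        rw [← pow_mul, mul_comm T 2]; exact hpowγ
      calc (1 - η)^T = √(((1 - η)^T)^2) := (Real.sqrt_sq (pow_nonneg hTnn T)).symm
        _ ≤ √γ := Real.sqrt_le_sqrt hsq
    calc |m| = (1 - η)^T * |δ0| := h1
      _ ≤ (1 - η)^T * 1 := by
          apply mul_le_mul_of_nonneg_left _ (pow_nonneg hTnn T)
          rw [hb]; exact hb1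
      _ = (1 - η)^T := mul_one _
      _ ≤ √γ := h2
  clear_value m
  -- gap reformulation
  have hgap : ∀ x : ℝ, cliffJ μ ε C μ - cliffJ μ ε C (μ + x)
      = if |x| ≤ ε then x^2 else C := by
    intro x
    have h0 : cliffJ μ ε C μ = 0 := by
      simp [cliffJ, abs_nonneg, hε.le]
    rw [h0, cliffJ, add_sub_cancel_left]
    split_ifs <;> ring
  -- measurability of the gap function
  have hGmeas : Measurable (fun x : ℝ => if |x| ≤ ε then x^2 else C) := by
    apply Measurable.ite _ (by fun_prop) measurable_const
    exact measurableSet_le (by fun_prop) measurable_const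
  constructor
  · -- expectation bound
    simp_rw [hgap]
    rw [integral_congr_ae (by filter_upwards [hδae] with ω h; rw [h] :
      (fun ω => if |sgdErr η δ0 w T ω| ≤ ε then (sgdErr η δ0 w T ω)^2 else C)
        =ᵐ[ℙ] fun ω => if |δ' ω| ≤ ε then (δ' ω)^2 else C)]
    set B : Set Ω := δ' ⁻¹' (Set.Icc (-ε) ε) with hBdef
    have hBmeas : MeasurableSet B := hδ'meas measurableSet_Icc
    have hPB : ℙ B = (gaussianReal m v) (Set.Icc (-ε) ε) := by
      rw [hBdef, ← hδlaw, Measure.map_apply hδ'meas measurableSet_Icc]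
    have hPBle : (ℙ B).toReal ≤ 1/5 := by
      rw [hPB]
      have h1 := gauss_Icc_le m hv0 (by linarith : -ε ≤ ε)
      have h100 : (100:ℝ) * ε^2 ≤ 2 * π * v := by
        have hπ : (3:ℝ) ≤ π := by
          have := Real.pi_gt_three
          linarith
        nlinarith
      have h10 : 10 * ε ≤ √(2 * π * v) := by
        rw [show (10:ℝ) * ε = √((10 * ε)^2) from (Real.sqrt_sq (by positivity)).symm]
        apply Real.sqrt_le_sqrt
        nlinarith
      have hs0 : (0:ℝ) < √(2 * π * v) := by positivity
      calc ((gaussianReal m v) (Set.Icc (-ε) ε)).toReal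
          ≤ (ε - -ε) * (√(2 * π * v))⁻¹ := h1
        _ = 2 * ε * (√(2 * π * v))⁻¹ := by ring
        _ ≤ 2 * ε * (10 * ε)⁻¹ := by
            apply mul_le_mul_of_nonneg_left _ (by positivity)
            exact inv_anti₀ (by positivity) h10
        _ = 1/5 := by
            field_simp
            ring
    have hPBc : (ℙ Bᶜ).toReal = 1 - (ℙ B).toReal := by
      rw [measure_compl hBmeas (measure_ne_top _ _), measure_univ,
        ENNReal.toReal_sub_of_le prob_le_one ENNReal.one_ne_top, ENNReal.toReal_one]
    -- integral lower bound via indicator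
    have hInt : Integrable (fun ω => if |δ' ω| ≤ ε then (δ' ω)^2 else C) ℙ := by
      apply Integrable.mono' (integrable_const C)
        ((hGmeas.comp hδ'meas).aestronglyMeasurable)
      filter_upwards with ω
      show ‖if |δ' ω| ≤ ε then (δ' ω)^2 else C‖ ≤ C
      rw [Real.norm_eq_abs]
      by_cases h : |δ' ω| ≤ ε
      · rw [if_pos h, abs_of_nonneg (sq_nonneg _)]
        have h2 : (δ' ω)^2 ≤ ε^2 := by
          rw [← sq_abs]
          exact pow_le_pow_left₀ (abs_nonneg _) h 2
        linarith
      · rw [if_neg h, abs_of_nonneg hCpos.le]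
    have hmono : ∀ ω, (Bᶜ).indicator (fun _ => C) ω
        ≤ (if |δ' ω| ≤ ε then (δ' ω)^2 else C) := by
      intro ω
      by_cases hω : ω ∈ Bᶜ
      · rw [Set.indicator_of_mem hω]
        have : ¬ |δ' ω| ≤ ε := by
          simp only [hBdef, Set.mem_compl_iff, Set.mem_preimage, Set.mem_Icc, not_and_or] at hω
          rw [abs_le]
          tauto
        simp [this]
      · rw [Set.indicator_of_notMem hω]
        split_ifs <;> positivity
    have hIntInd : Integrable ((Bᶜ).indicator (fun _ => C)) ℙ :=
      (integrable_const C).indicator hBmeas.compl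
    calc (∫ ω, if |δ' ω| ≤ ε then (δ' ω)^2 else C)
        ≥ ∫ ω, (Bᶜ).indicator (fun _ => C) ω := integral_mono hIntInd hInt hmono
      _ = (ℙ Bᶜ).toReal • C := integral_indicator_const C hBmeas.compl
      _ = (1 - (ℙ B).toReal) * C := by rw [hPBc, smul_eq_mul]
      _ ≥ C / 2 := by nlinarith
  · -- probability bound
    simp_rw [hgap]
    have hPE : ℙ {ω | (if |sgdErr η δ0 w T ω| ≤ ε then (sgdErr η δ0 w T ω)^2 else C) ≤ γ}
        = ℙ {ω | (if |δ' ω| ≤ ε then (δ' ω)^2 else C) ≤ γ} := by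
      apply measure_congr
      filter_upwards [hδae] with ω h
      show ((if |sgdErr η δ0 w T ω| ≤ ε then (sgdErr η δ0 w T ω)^2 else C) ≤ γ)
        = ((if |δ' ω| ≤ ε then (δ' ω)^2 else C) ≤ γ)
      rw [h]
    rw [hPE]
    have hsγε : √γ ≤ ε := by
      rw [show ε = √(ε^2) from (Real.sqrt_sq hε.le).symm]
      apply Real.sqrt_le_sqrt
      nlinarith
    have hsub : δ' ⁻¹' (Set.Icc (-√γ) (√γ)) ⊆
        {ω | (if |δ' ω| ≤ ε then (δ' ω)^2 else C) ≤ γ} := by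
      intro ω hω
      simp only [Set.mem_preimage, Set.mem_Icc] at hω
      have habs : |δ' ω| ≤ √γ := abs_le.mpr hω
      have hle : |δ' ω| ≤ ε := le_trans habs hsγε
      show (if |δ' ω| ≤ ε then (δ' ω)^2 else C) ≤ γ
      rw [if_pos hle]
      nlinarith [sq_abs (δ' ω), Real.sq_sqrt hγpos.le, abs_nonneg (δ' ω)]
    have hmap2 : ℙ (δ' ⁻¹' (Set.Icc (-√γ) (√γ)))
        = (gaussianReal m v) (Set.Icc (-√γ) (√γ)) := by
      rw [← hδlaw, Measure.map_apply hδ'meas measurableSet_Icc]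
    -- numeric lower bound
    have hexp : (1:ℝ)/2 ≤ rexp (- (√γ + |m|)^2 / (2 * v)) := by
      have h4 : (√γ + |m|)^2 ≤ 4 * γ := by
        nlinarith [hmb, Real.sq_sqrt hγpos.le, abs_nonneg m]
      have h5 : (√γ + |m|)^2 / (2 * v) ≤ 8 * γ / η := by
        rw [div_le_div_iff₀ (by positivity) hηpos]
        nlinarith
      have h6 : 8 * γ / η ≤ 1/2 := by
        rw [div_le_iff₀ hηpos]
        nlinarith
      calc (1:ℝ)/2 ≤ 1 + (-(8 * γ / η)) := by linarith
        _ ≤ rexp (-(8 * γ / η)) := by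
            have := Real.add_one_le_exp (-(8 * γ / η))
            linarith
        _ ≤ rexp (- (√γ + |m|)^2 / (2 * v)) := by
            apply Real.exp_le_exp.mpr
            rw [neg_div]
            linarith
    have hsqrtV : √(2 * π * v) ≤ 3 * √η := by
      calc √(2 * π * v) ≤ √(9 * η) := by
            apply Real.sqrt_le_sqrt
            nlinarith [Real.pi_le_four, hVub, hVpos]
        _ = 3 * √η := by
            rw [show (9:ℝ) * η = 3^2 * η by norm_num, Real.sqrt_mul (by norm_num),
              Real.sqrt_sq (by norm_num)]
    have hkey : γ * √η ≤ √γ * η := by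
      have h1 : √γ ≤ √η := Real.sqrt_le_sqrt hγleη
      have hγeq : √γ * √γ = γ := Real.mul_self_sqrt hγpos.le
      have hηeq : √η * √η = η := Real.mul_self_sqrt hηpos.le
      have h2 : 0 ≤ √γ * √η * (√η - √γ) :=
        mul_nonneg (mul_nonneg (Real.sqrt_nonneg γ) (Real.sqrt_nonneg η))
          (sub_nonneg.mpr h1)
      have h3 : √γ * √η * (√η - √γ) = √γ * (√η * √η) - √γ * √γ * √η := by ring
      rw [hγeq, hηeq] at h3
      linarith
    have hsη : (0:ℝ) < √η := Real.sqrt_pos.mpr hηpos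
    have hchain : (1/3) * γ / η ≤ 2 * √γ * ((√(2 * π * v))⁻¹ * rexp (- (√γ + |m|)^2 / (2 * v))) := by
      have hs0 : (0:ℝ) < √(2 * π * v) := by positivity
      calc (1/3) * γ / η ≤ √γ / (3 * √η) := by
            rw [div_le_div_iff₀ hηpos (by positivity)]
            nlinarith
        _ = 2 * √γ * ((3 * √η)⁻¹ * (1/2)) := by
            rw [div_eq_mul_inv]; ring
        _ ≤ 2 * √γ * ((√(2 * π * v))⁻¹ * rexp (- (√γ + |m|)^2 / (2 * v))) := by
            apply mul_le_mul_of_nonneg_left _ (by positivity)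
            exact mul_le_mul (inv_anti₀ hs0 hsqrtV) hexp (by norm_num)
              (by positivity)
    calc (ℙ {ω | (if |δ' ω| ≤ ε then (δ' ω)^2 else C) ≤ γ}).toReal
        ≥ (ℙ (δ' ⁻¹' (Set.Icc (-√γ) (√γ)))).toReal := by
          apply ENNReal.toReal_mono (measure_ne_top _ _)
          exact measure_mono hsub
      _ = ((gaussianReal m v) (Set.Icc (-√γ) (√γ))).toReal := by rw [hmap2]
      _ ≥ 2 * √γ * ((√(2 * π * v))⁻¹ * rexp (- (√γ + |m|)^2 / (2 * v))) :=
          gauss_Icc_ge m hv0 hsγ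
      _ ≥ (1/3) * γ / η := hchain
end
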